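/- arXiv:0906.4326 — 7 statements merged into one kernel-verified Lean document; each statement's English description precedes it below -/
import Mathlib

section
/- A pure strategy σ for player i in a finite normal-form game Γ is rationalizable if and only if it is rationalizable′. -/
open MeasureTheory

namespace IA

set_option linter.unusedVariables false

variable {n : ℕ}

/-! ### Finite normal-form games -/

/-- `Oth S i`: profiles of strategies of the players other than `i` (the set `Σ_{-i}`). -/
def Oth (S : Fin n → Type) (i : Fin n) : Type := ∀ j : {j : Fin n // j ≠ i}, S j.1

instance (S : Fin n → Type) [∀ j, Fintype (S j)] (i : Fin n) : Fintype (Oth S i) := by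
  unfold Oth; infer_instance

instance (S : Fin n → Type) [∀ j, Nonempty (S j)] (i : Fin n) : Nonempty (Oth S i) := by
  unfold Oth; infer_instance

variable {S : Fin n → Type}

/-- Glue a strategy for player `i` with a profile for the other players. -/
def ext (i : Fin n) (σ : S i) (τ : Oth S i) : ∀ j, S j :=
  fun j => if h : j = i then cast (congrArg S h).symm σ else τ ⟨j, h⟩

section
variable [∀ j, Fintype (S j)]

/-- Expected utility of the pure strategy `σ` of player `i` against the belief `μ` on `Σ_{-i}`. -/
noncomputable def EU (u : ∀ i : Fin n, (∀ j, S j) → ℝ) (i : Fin n) (σ : S i)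
    (μ : Oth S i → ℝ) : ℝ :=
  ∑ τ : Oth S i, μ τ * u i (ext i σ τ)

/-- `μ` is a probability distribution on `Σ_{-i}` (a belief of player `i`). -/
def IsBelief {i : Fin n} (μ : Oth S i → ℝ) : Prop :=
  (∀ τ, 0 ≤ μ τ) ∧ ∑ τ, μ τ = 1

/-- `σ` is a best response (maximizes expected utility over `Σ_i`) to belief `μ`. -/
def BestResponse (u : ∀ i : Fin n, (∀ j, S j) → ℝ) (i : Fin n) (σ : S i)
    (μ : Oth S i → ℝ) : Prop :=
  ∀ σ' : S i, EU u i σ' μ ≤ EU u i σ μ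

end

/-- The product `Π_{j' ≠ j} X_{j'}` of sets of strategies, viewed inside `Σ_{-j}`. -/
def OthSet (X : ∀ j : Fin n, Set (S j)) (j : Fin n) : Set (Oth S j) :=
  {τ | ∀ j', τ j' ∈ X j'.1}

/-! ### Rationalizability -/

section
variable [∀ j, Fintype (S j)]

/-- Pearce's first definition of rationalizability. -/
def Rationalizable (u : ∀ i : Fin n, (∀ j, S j) → ℝ) (i : Fin n) (σ : S i) : Prop :=
  ∃ (Z : ∀ j : Fin n, Set (S j)) (μ : ∀ j : Fin n, S j → Oth S j → ℝ),
    σ ∈ Z i ∧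
    ∀ j : Fin n, ∀ σ' ∈ Z j,
      IsBelief (μ j σ') ∧ (∀ τ, 0 < μ j σ' τ → τ ∈ OthSet Z j) ∧
      BestResponse u j σ' (μ j σ')

/-- Pearce's second definition of rationalizability, via iterated deletion. -/
def Rationalizable' (u : ∀ i : Fin n, (∀ j, S j) → ℝ) (i : Fin n) (σ : S i) : Prop :=
  ∃ (X : ℕ → ∀ j : Fin n, Set (S j)) (μ : ℕ → ∀ j : Fin n, S j → Oth S j → ℝ),
    (∀ j, X 0 j = Set.univ) ∧
    (∀ k, σ ∈ X k i) ∧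
    ∀ (k : ℕ) (j : Fin n), ∀ σ' ∈ X (k+1) j,
      IsBelief (μ k j σ') ∧ (∀ τ, 0 < μ k j σ' τ → τ ∈ OthSet (X k) j) ∧
      BestResponse u j σ' (μ k j σ')

end

/-- Proposition: Pearce. A strategy is rationalizable iff it is
rationalizable′. -/
theorem rationalizable_iff_rationalizable'
    {S : Fin n → Type} [∀ j, Fintype (S j)] [∀ j, Nonempty (S j)]
    (u : ∀ i : Fin n, (∀ j, S j) → ℝ) (i : Fin n) (σ : S i) :
    Rationalizable u i σ ↔ Rationalizable' u i σ := by
  classical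
  constructor
  · rintro ⟨Z, μ, hσ, hZ⟩
    refine ⟨fun k => if k = 0 then (fun j => Set.univ) else Z, fun _ => μ,
      fun j => by simp, fun k => ?_, fun k j σ' hσ' => ?_⟩
    · by_cases hk : k = 0 <;> simp [hk, hσ]
    · have hσ'' : σ' ∈ Z j := by simpa using hσ'
      obtain ⟨h1, h2, h3⟩ := hZ j σ' hσ''
      refine ⟨h1, fun τ hτ => ?_, h3⟩
      by_cases hk : k = 0
      · simp [hk, OthSet]
      · simpa [hk] using h2 τ hτ
  · rintro ⟨X, μ, hX0, hσ, hX⟩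
    obtain ⟨x, y, hne, he⟩ := Finite.exists_ne_map_eq_of_infinite (fun k => X (k + 1))
    set a := min x y + 1 with ha
    set b := max x y + 1 with hb
    have hab : a < b := by
      have h := min_lt_max.mpr hne
      omega
    have hXab : X a = X b := by
      rcases le_total x y with h | h
      · simpa [ha, hb, min_eq_left h, max_eq_right h] using he
      · simpa [ha, hb, min_eq_right h, max_eq_left h] using he.symm
    set Z : ∀ j : Fin n, Set (S j) := fun j => ⋃ k ∈ Finset.Ico a b, X k j with hZdef
    have key : ∀ j : Fin n, ∀ σ' ∈ Z j, ∃ ν : Oth S j → ℝ,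
        IsBelief ν ∧ (∀ τ, 0 < ν τ → τ ∈ OthSet Z j) ∧ BestResponse u j σ' ν := by
      intro j σ' hσ'
      simp only [hZdef, Set.mem_iUnion] at hσ'
      obtain ⟨k, hk, hmem⟩ := hσ'
      rw [Finset.mem_Ico] at hk
      set k' := if k = a then b else k with hk'
      have hk'1 : 1 ≤ k' := by by_cases h : k = a <;> simp [hk', h] <;> omega
      have hk'mem : a ≤ k' - 1 ∧ k' - 1 < b := by
        by_cases h : k = a <;> simp [hk', h] <;> omega
      have hmem' : σ' ∈ X k' j := by
        by_cases h : k = a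
        · rw [hk']
          simp only [if_pos h]
          rw [← congrFun hXab j, ← h]
          exact hmem
        · simpa [hk', h] using hmem
      obtain ⟨h1, h2, h3⟩ := hX (k' - 1) j σ'
        (by rw [Nat.sub_add_cancel hk'1]; exact hmem')
      refine ⟨μ (k' - 1) j σ', h1, fun τ hτ j' => ?_, h3⟩
      have hτj' := h2 τ hτ j'
      simp only [hZdef, Set.mem_iUnion]
      exact ⟨k' - 1, Finset.mem_Ico.mpr hk'mem, hτj'⟩
    refine ⟨Z, fun j σ' => if h : σ' ∈ Z j then (key j σ' h).choose else fun _ => 0, ?_, ?_⟩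
    · simp only [hZdef, Set.mem_iUnion]
      exact ⟨a, Finset.mem_Ico.mpr ⟨le_refl a, hab⟩, hσ a⟩
    · intro j σ' h
      simp only [dif_pos h]
      exact (key j σ' h).choose_spec

end IA
end

section
/- A pure strategy σ for player i is not strongly dominated by any mixed strategy of player i with respect to Σ′_{-i} if and only if there is a belief μ of player i whose support is contained in Σ′_{-i} such that σ is a best response to μ. -/
open MeasureTheory

namespace IA

set_option linter.unusedVariables false

variable {n : ℕ}

variable {S : Fin n → Type}

/-! ### Mixed strategies, weak/strong dominance, iterated deletion -/

/-- a probability distribution on a finite type -/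
def IsDist {α : Type} [Fintype α] (ν : α → ℝ) : Prop := (∀ a, 0 ≤ ν a) ∧ ∑ a, ν a = 1

section
variable [∀ j, Fintype (S j)]

/-- Expected utility of the mixed strategy `ν` of player `i` against `τ_{-i}`. -/
noncomputable def EUmix (u : ∀ i : Fin n, (∀ j, S j) → ℝ) (i : Fin n) (ν : S i → ℝ)
    (τ : Oth S i) : ℝ :=
  ∑ σ : S i, ν σ * u i (ext i σ τ)

/-- The mixed strategy `ν` strongly dominates the pure strategy `σ` with respect to `Y ⊆ Σ_{-i}`. -/
def SDom (u : ∀ i : Fin n, (∀ j, S j) → ℝ) (i : Fin n) (ν : S i → ℝ) (σ : S i)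
    (Y : Set (Oth S i)) : Prop :=
  ∀ τ ∈ Y, u i (ext i σ τ) < EUmix u i ν τ

/-- The mixed strategy `ν` weakly dominates the pure strategy `σ` with respect to `Y ⊆ Σ_{-i}`. -/
def WDom (u : ∀ i : Fin n, (∀ j, S j) → ℝ) (i : Fin n) (ν : S i → ℝ) (σ : S i)
    (Y : Set (Oth S i)) : Prop :=
  (∀ τ ∈ Y, u i (ext i σ τ) ≤ EUmix u i ν τ) ∧ (∃ τ ∈ Y, u i (ext i σ τ) < EUmix u i ν τ)

/-- `σ` is not weakly dominated by any mixed strategy of `i` with respect to `Y`. -/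
def NotWDominated (u : ∀ i : Fin n, (∀ j, S j) → ℝ) (i : Fin n) (σ : S i)
    (Y : Set (Oth S i)) : Prop :=
  ¬ ∃ ν : S i → ℝ, IsDist ν ∧ WDom u i ν σ Y

/-- `Xiter u k j`: the strategies of player `j` surviving `k` rounds of iterated deletion of
weakly dominated strategies. -/
def Xiter (u : ∀ i : Fin n, (∀ j, S j) → ℝ) : ℕ → ∀ j : Fin n, Set (S j)
  | 0, _ => Set.univ
  | (k+1), j => {σ | σ ∈ Xiter u k j ∧ NotWDominated u j σ (OthSet (Xiter u k) j)}

end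

/-- Pearce. `σ` is not strongly dominated by any mixed strategy with respect
to `Y` iff `σ` is a best response to some belief whose support is contained in `Y`. -/
theorem not_strongly_dominated_iff_best_response
    {S : Fin n → Type} [∀ j, Fintype (S j)] [∀ j, Nonempty (S j)]
    (u : ∀ i : Fin n, (∀ j, S j) → ℝ) (i : Fin n) (σ : S i)
    (Y : Set (Oth S i)) (hY : Y.Nonempty) :
    (¬ ∃ ν : S i → ℝ, IsDist ν ∧ SDom u i ν σ Y) ↔
      ∃ μ : Oth S i → ℝ, IsBelief μ ∧ (∀ τ, 0 < μ τ → τ ∈ Y) ∧ BestResponse u i σ μ := by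
  classical
  constructor
  · intro hnd
    set O : Set (Oth S i → ℝ) := {x | ∀ τ ∈ Y, 0 < x τ} with hO
    set C : Set (Oth S i → ℝ) :=
      {x | ∃ ν : S i → ℝ, IsDist ν ∧ x = fun τ => EUmix u i ν τ - u i (ext i σ τ)} with hC
    have hOrw : O = ⋂ τ, ⋂ (_ : τ ∈ Y), {x : Oth S i → ℝ | 0 < x τ} := by
      ext x; simp [hO, Set.mem_iInter]
    have hO_open : IsOpen O := by
      rw [hOrw]
      exact isOpen_iInter_of_finite fun τ => isOpen_iInter_of_finite fun _ =>
        isOpen_lt continuous_const (continuous_apply τ)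
    have hO_conv : Convex ℝ O := by
      rw [hOrw]
      refine convex_iInter fun τ => convex_iInter fun _ => ?_
      intro x hx y hy a b ha hb hab
      simp only [Set.mem_setOf_eq, Pi.add_apply, Pi.smul_apply, smul_eq_mul] at hx hy ⊢
      rcases lt_or_eq_of_le ha with h | h
      · have h1 := mul_pos h hx
        have h2 := mul_nonneg hb hy.le
        linarith
      · have h2 := mul_pos (show (0:ℝ) < b by linarith) hy
        rw [← h]
        linarith
    have hC_conv : Convex ℝ C := by
      rintro x ⟨ν₁, ⟨hν₁0, hν₁1⟩, rfl⟩ y ⟨ν₂, ⟨hν₂0, hν₂1⟩, rfl⟩ a b ha hb hab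
      refine ⟨fun σ' => a * ν₁ σ' + b * ν₂ σ',
        ⟨fun σ' => add_nonneg (mul_nonneg ha (hν₁0 σ')) (mul_nonneg hb (hν₂0 σ')), by
        rw [Finset.sum_add_distrib, ← Finset.mul_sum, ← Finset.mul_sum, hν₁1, hν₂1]
        linarith⟩, ?_⟩
      funext τ
      have hsum : (∑ σ' : S i, (a * ν₁ σ' + b * ν₂ σ') * u i (ext i σ' τ))
          = a * ∑ σ' : S i, ν₁ σ' * u i (ext i σ' τ)
            + b * ∑ σ' : S i, ν₂ σ' * u i (ext i σ' τ) := by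
        rw [Finset.mul_sum, Finset.mul_sum, ← Finset.sum_add_distrib]
        exact Finset.sum_congr rfl fun _ _ => by ring
      simp only [Pi.add_apply, Pi.smul_apply, smul_eq_mul, EUmix, hsum]
      linear_combination (- u i (ext i σ τ)) * hab
    have hdisj : Disjoint O C := by
      rw [Set.disjoint_left]
      rintro x hxO ⟨ν, hν, rfl⟩
      exact hnd ⟨ν, hν, fun τ hτ => sub_pos.mp (hxO τ hτ)⟩
    obtain ⟨f, u0, hfO, hfC⟩ := geometric_hahn_banach_open hO_conv hO_open hC_conv hdisj
    set g : Oth S i → ℝ := fun τ => f (fun τ' => if τ = τ' then 1 else 0) with hg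
    have hf : ∀ x : Oth S i → ℝ, f x = ∑ τ, x τ * g τ := by
      intro x
      have hx := pi_eq_sum_univ x
      calc f x = f (∑ τ, x τ • fun τ' => if τ = τ' then (1:ℝ) else 0) := by rw [← hx]
        _ = ∑ τ, x τ * g τ := by rw [map_sum]; simp [hg]
    have h0C : (0 : Oth S i → ℝ) ∈ C := by
      refine ⟨fun σ'' => if σ'' = σ then 1 else 0,
        ⟨fun σ'' => by by_cases h : σ'' = σ <;> simp [h], by simp⟩, ?_⟩
      funext τ
      simp [EUmix, ite_mul, Finset.sum_ite_eq']
    have hu0 : u0 ≤ 0 := by have := hfC 0 h0C; simpa using this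
    have hu0' : 0 ≤ u0 := by
      by_contra h
      push_neg at h
      set c := f (fun _ => (1:ℝ)) with hc
      have hc0 : c < u0 := hfO _ (fun τ _ => one_pos)
      have hcneg : c < 0 := lt_of_lt_of_le hc0 hu0
      have key : ∀ ε : ℝ, 0 < ε → ε * c < u0 := by
        intro ε hε
        have heq : (fun _ : Oth S i => ε) = ε • (fun _ => (1:ℝ)) := by
          funext τ'; simp
        have h2 := hfO (fun _ => ε) (fun τ _ => hε)
        rw [heq, ContinuousLinearMap.map_smul] at h2
        simpa [smul_eq_mul] using h2
      have hcne : c ≠ 0 := ne_of_lt hcneg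
      have hpos' : 0 < u0 / (2 * c) := div_pos_of_neg_of_neg h (by linarith)
      have hεc : u0 / (2 * c) * c = u0 / 2 := by field_simp
      have h3 := key (u0 / (2 * c)) hpos'
      rw [hεc] at h3
      linarith
    have hu0eq : u0 = 0 := le_antisymm hu0 hu0'
    have hsumg : ∑ τ, g τ < 0 := by
      have h1 := hfO (fun _ => 1) (fun τ _ => one_pos)
      rw [hf] at h1
      simpa [hu0eq] using h1
    have keylem : ∀ (τ : Oth S i) (t : ℝ),
        ((fun τ' => 1 + if τ' = τ then t else 0) ∈ O) → (∑ τ', g τ') + t * g τ < 0 := by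
      intro τ t hmem
      have h2 := hfO _ hmem
      rw [hf, hu0eq] at h2
      have hsplit : ∑ τ', (1 + if τ' = τ then t else 0) * g τ'
          = (∑ τ', g τ') + t * g τ := by
        simp [add_mul, ite_mul, Finset.sum_add_distrib, Finset.sum_ite_eq']
      rwa [hsplit] at h2
    have hgY : ∀ τ, τ ∉ Y → g τ = 0 := by
      intro τ hτ
      by_contra hne
      have key : ∀ t : ℝ, (∑ τ', g τ') + t * g τ < 0 := by
        intro t
        refine keylem τ t fun τ' hτ' => ?_
        have hne' : τ' ≠ τ := fun h => hτ (h ▸ hτ')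
        simp [hne']
      have h1 := key ((-(∑ τ', g τ') + 1) / g τ)
      rw [div_mul_cancel₀ _ hne] at h1
      linarith
    have hgle : ∀ τ, g τ ≤ 0 := by
      intro τ
      by_contra hpos
      push_neg at hpos
      have key : ∀ t : ℝ, 0 < t → (∑ τ', g τ') + t * g τ < 0 := by
        intro t ht
        refine keylem τ t fun τ' _ => ?_
        dsimp only
        split <;> linarith
      have h1 := key ((-(∑ τ', g τ') + 1) / g τ)
        (by apply div_pos (by linarith) hpos)
      rw [div_mul_cancel₀ _ (ne_of_gt hpos)] at h1
      linarith
    set s : ℝ := -∑ τ, g τ with hs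
    have hspos : 0 < s := by simp only [hs]; linarith
    refine ⟨fun τ => -g τ / s, ⟨fun τ => div_nonneg (by linarith [hgle τ]) hspos.le, ?_⟩,
      ?_, ?_⟩
    · rw [← Finset.sum_div]
      rw [show (∑ τ, -g τ) = s by rw [hs, ← Finset.sum_neg_distrib]]
      exact div_self (ne_of_gt hspos)
    · intro τ hτ
      by_contra hny
      dsimp only at hτ
      rw [hgY τ hny] at hτ
      norm_num at hτ
    · intro σ'
      have hv : (fun τ => u i (ext i σ' τ) - u i (ext i σ τ)) ∈ C := by
        refine ⟨fun σ'' => if σ'' = σ' then 1 else 0,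
          ⟨fun σ'' => by by_cases h : σ'' = σ' <;> simp [h], by simp⟩, ?_⟩
        funext τ
        simp [EUmix, ite_mul, Finset.sum_ite_eq']
      have h2 := hfC _ hv
      rw [hf, hu0eq] at h2
      have heq : EU u i σ' (fun τ => -g τ / s) - EU u i σ (fun τ => -g τ / s)
          = (∑ τ, (u i (ext i σ' τ) - u i (ext i σ τ)) * g τ) * (-1 / s) := by
        simp only [EU]
        rw [← Finset.sum_sub_distrib, Finset.sum_mul]
        refine Finset.sum_congr rfl fun τ _ => ?_
        field_simp
        ring
      have hneg : (∑ τ, (u i (ext i σ' τ) - u i (ext i σ τ)) * g τ) * (-1 / s) ≤ 0 := by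
        apply mul_nonpos_of_nonneg_of_nonpos h2
        apply div_nonpos_of_nonpos_of_nonneg <;> linarith
      linarith [heq ▸ hneg]
  · rintro ⟨μ, ⟨hμ0, hμ1⟩, hsupp, hbr⟩ ⟨ν, ⟨hν0, hν1⟩, hdom⟩
    have hstep1 : EU u i σ μ < ∑ τ, μ τ * EUmix u i ν τ := by
      apply Finset.sum_lt_sum
      · intro τ _
        rcases lt_or_eq_of_le (hμ0 τ) with h | h
        · exact mul_le_mul_of_nonneg_left (le_of_lt (hdom τ (hsupp τ h))) (le_of_lt h)
        · simp [← h]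
      · have hex : ∃ τ, μ τ ≠ 0 := by
          by_contra hc
          push_neg at hc
          simp [hc] at hμ1
        obtain ⟨τ, hτ⟩ := hex
        have hpos : 0 < μ τ := lt_of_le_of_ne (hμ0 τ) (Ne.symm hτ)
        exact ⟨τ, Finset.mem_univ τ, mul_lt_mul_of_pos_left (hdom τ (hsupp τ hpos)) hpos⟩
    have hstep2 : ∑ τ, μ τ * EUmix u i ν τ = ∑ σ', ν σ' * EU u i σ' μ := by
      simp only [EUmix, EU, Finset.mul_sum]
      rw [Finset.sum_comm]
      exact Finset.sum_congr rfl fun _ _ => Finset.sum_congr rfl fun _ _ => by ring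
    have hstep3 : ∑ σ', ν σ' * EU u i σ' μ ≤ EU u i σ μ := by
      calc ∑ σ', ν σ' * EU u i σ' μ ≤ ∑ σ', ν σ' * EU u i σ μ :=
            Finset.sum_le_sum fun σ' _ => mul_le_mul_of_nonneg_left (hbr σ') (hν0 σ')
        _ = EU u i σ μ := by rw [← Finset.sum_mul, hν1, one_mul]
    rw [hstep2] at hstep1
    linarith


end IA
end

section
/- A pure strategy σ for player i is not weakly dominated by any mixed strategy of player i with respect to Σ′_{-i} if and only if there is a belief μ of player i whose support is all of Σ′_{-i} such that σ is a best response to μ. -/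
open MeasureTheory

namespace IA

set_option linter.unusedVariables false

variable {n : ℕ}

variable {S : Fin n → Type}

section Helpers
open Matrix Finset

lemma sum_dotProduct' {β ι : Type} [Fintype β] [Fintype ι] (f : β → ι → ℝ) (z : ι → ℝ) :
    (∑ b, f b) ⬝ᵥ z = ∑ b, f b ⬝ᵥ z := by
  simp only [dotProduct, Finset.sum_apply, Finset.sum_mul]
  exact Finset.sum_comm

lemma dotProduct_sum' {β ι : Type} [Fintype β] [Fintype ι] (z : ι → ℝ) (f : β → ι → ℝ) :
    z ⬝ᵥ (∑ b, f b) = ∑ b, z ⬝ᵥ f b := by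
  simp only [dotProduct, Finset.sum_apply, Finset.mul_sum]
  exact Finset.sum_comm

lemma farkas : ∀ (m : ℕ) {ι : Type} [Fintype ι] (r : Fin m → ι → ℝ) (c : ι → ℝ),
    (∀ z : ι → ℝ, (∀ j, 0 ≤ r j ⬝ᵥ z) → 0 ≤ c ⬝ᵥ z) →
    ∃ lam : Fin m → ℝ, (∀ j, 0 ≤ lam j) ∧ c = ∑ j, lam j • r j := by
  intro m
  induction m with
  | zero =>
    intro ι _ r c h
    have h0 : 0 ≤ c ⬝ᵥ (-c) := h (-c) (fun j => j.elim0)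
    rw [dotProduct_neg, neg_nonneg] at h0
    have h1 : c ⬝ᵥ c = 0 := le_antisymm h0 (Finset.sum_nonneg fun i _ => mul_self_nonneg (c i))
    rw [dotProduct_self_eq_zero] at h1
    exact ⟨Fin.elim0, fun j => j.elim0, by simp [h1]⟩
  | succ m ih =>
    intro ι _ r c h
    by_cases hc : ∀ z : ι → ℝ, (∀ j : Fin m, 0 ≤ r j.castSucc ⬝ᵥ z) → 0 ≤ c ⬝ᵥ z
    · obtain ⟨lam, hlam, hc'⟩ := ih (fun j => r j.castSucc) c hc
      refine ⟨Fin.snoc lam 0, ?_, ?_⟩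
      · intro j
        induction j using Fin.lastCases with
        | last => simp
        | cast j => simpa using hlam j
      · rw [Fin.sum_univ_castSucc]
        simp only [Fin.snoc_castSucc, Fin.snoc_last, zero_smul, add_zero]
        exact hc'
    · push_neg at hc
      obtain ⟨z₀, hz₀, hcz₀⟩ := hc
      set a : ι → ℝ := r (Fin.last m) with ha
      set t₀ : ℝ := a ⬝ᵥ z₀ with ht₀def
      have ht₀ : t₀ < 0 := by
        by_contra ht
        push_neg at ht
        refine absurd (h z₀ (fun j => ?_)) (not_le.mpr hcz₀)
        induction j using Fin.lastCases with
        | last => exact ht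
        | cast j => exact hz₀ j
      have ht₀ne : t₀ ≠ 0 := ne_of_lt ht₀
      set r' : Fin m → ι → ℝ := fun j => r j.castSucc - ((r j.castSucc ⬝ᵥ z₀) / t₀) • a with hr'
      set c' : ι → ℝ := c - ((c ⬝ᵥ z₀) / t₀) • a with hc'def
      have key : ∀ z : ι → ℝ, (∀ j, 0 ≤ r' j ⬝ᵥ z) → 0 ≤ c' ⬝ᵥ z := by
        intro z hz
        set w : ι → ℝ := z - ((a ⬝ᵥ z) / t₀) • z₀ with hw
        have haw : a ⬝ᵥ w = 0 := by
          rw [hw, dotProduct_sub, dotProduct_smul, smul_eq_mul, ← ht₀def]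
          field_simp
          ring
        have hrw : ∀ j : Fin m, r j.castSucc ⬝ᵥ w = r' j ⬝ᵥ z := by
          intro j
          rw [hw, hr']
          simp only [dotProduct_sub, sub_dotProduct, dotProduct_smul, smul_dotProduct,
            smul_eq_mul]
          ring
        have hcw : c ⬝ᵥ w = c' ⬝ᵥ z := by
          rw [hw, hc'def]
          simp only [dotProduct_sub, sub_dotProduct, dotProduct_smul, smul_dotProduct,
            smul_eq_mul]
          ring
        have := h w (fun j => by
          induction j using Fin.lastCases with
          | last => rw [← ha, haw]
          | cast j => rw [hrw j]; exact hz j)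
        rwa [hcw] at this
      obtain ⟨lam', hlam', heq⟩ := ih r' c' key
      set S : ℝ := ∑ j, lam' j * (r j.castSucc ⬝ᵥ z₀) with hS
      have hSnn : 0 ≤ S := Finset.sum_nonneg fun j _ => mul_nonneg (hlam' j) (hz₀ j)
      set μ : ℝ := (c ⬝ᵥ z₀ - S) / t₀ with hμ
      have hμpos : 0 < μ := div_pos_of_neg_of_neg (by linarith) ht₀
      refine ⟨Fin.snoc lam' μ, ?_, ?_⟩
      · intro j
        induction j using Fin.lastCases with
        | last => simpa using hμpos.le
        | cast j => simpa using hlam' j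
      · rw [Fin.sum_univ_castSucc]
        simp only [Fin.snoc_castSucc, Fin.snoc_last]
        have hsum : ∑ j, lam' j • r' j
            = (∑ j, lam' j • r (Fin.castSucc j)) - (S / t₀) • a := by
          rw [hr', hS]
          funext x
          simp only [Finset.sum_apply, Pi.sub_apply, Pi.smul_apply, smul_eq_mul, smul_sub,
            Finset.sum_sub_distrib, Finset.sum_div, Finset.sum_mul]
          congr 1
          refine Finset.sum_congr rfl fun j _ => ?_
          ring
        have hc2 : c = c' + ((c ⬝ᵥ z₀) / t₀) • a := by rw [hc'def]; abel
        rw [hc2, heq, hsum, hμ, sub_div, sub_smul]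
        abel


lemma farkas' {β ι : Type} [Fintype β] [Fintype ι] (r : β → ι → ℝ) (c : ι → ℝ)
    (h : ∀ z : ι → ℝ, (∀ b, 0 ≤ r b ⬝ᵥ z) → 0 ≤ c ⬝ᵥ z) :
    ∃ lam : β → ℝ, (∀ b, 0 ≤ lam b) ∧ c = ∑ b, lam b • r b := by
  classical
  let e := Fintype.equivFin β
  obtain ⟨lam, hlam, heq⟩ := farkas (Fintype.card β) (fun j => r (e.symm j)) c
    (fun z hz => h z (fun b => by simpa using hz (e b)))
  refine ⟨fun b => lam (e b), fun b => hlam (e b), ?_⟩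
  rw [heq, ← Equiv.sum_comp e.symm (fun b => lam (e b) • r b)]
  simp

lemma tucker {ι : Type} [Fintype ι] [DecidableEq ι] (K : ι → ι → ℝ)
    (hskew : ∀ i j, K i j = - K j i) :
    ∃ z : ι → ℝ, (∀ i, 0 ≤ z i) ∧ (∀ i, 0 ≤ K i ⬝ᵥ z) ∧ (∀ i, 0 < z i + K i ⬝ᵥ z) := by
  classical
  have key : ∀ i₀ : ι, ∃ z : ι → ℝ,
      (∀ i, 0 ≤ z i) ∧ (∀ i, 0 ≤ K i ⬝ᵥ z) ∧ 0 < z i₀ + K i₀ ⬝ᵥ z := by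
    intro i₀
    by_cases hex : ∃ z : ι → ℝ, (∀ i, 0 ≤ z i) ∧ (∀ i, 0 ≤ K i ⬝ᵥ z) ∧ 0 < K i₀ ⬝ᵥ z
    · obtain ⟨z, h1, h2, h3⟩ := hex
      exact ⟨z, h1, h2, by have := h1 i₀; linarith⟩
    · push_neg at hex
      obtain ⟨lam, hlam, heq⟩ := farkas' (ι := ι)
        (Sum.elim (fun j : ι => K j) (fun j : ι => Pi.single j 1)) (-(K i₀))
        (by
          intro z hz
          have hz1 : ∀ j, 0 ≤ z j := fun j => by
            have := hz (Sum.inr j); simpa [single_dotProduct] using this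
          have hz2 : ∀ j, 0 ≤ K j ⬝ᵥ z := fun j => hz (Sum.inl j)
          have := hex z hz1 hz2
          rw [neg_dotProduct]
          linarith)
      set y : ι → ℝ := fun j => lam (Sum.inl j) with hy
      set z : ι → ℝ := y + Pi.single i₀ 1 with hzdef
      have hz1 : ∀ i, 0 ≤ z i := by
        intro i
        refine add_nonneg (hlam _) ?_
        by_cases hii : i = i₀
        · subst hii; simp
        · simp [Pi.single_eq_of_ne hii]
      have hz2 : ∀ k, K k ⬝ᵥ z = lam (Sum.inr k) := by
        intro k
        have hk := congrFun heq k
        rw [Fintype.sum_sum_type] at hk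
        simp only [Sum.elim_inl, Sum.elim_inr, Finset.sum_apply, Pi.add_apply,
          Pi.smul_apply, smul_eq_mul, Pi.neg_apply] at hk
        have hsingle : ∑ x : ι, lam (Sum.inr x) * Pi.single (M := fun _ => ℝ) x 1 k
            = lam (Sum.inr k) := by
          rw [Finset.sum_eq_single k]
          · simp
          · intro b _ hb; simp [Pi.single_apply, hb]
          · simp
        rw [hsingle] at hk
        -- hk : -K i₀ k = ∑ x, lam (inl x) * K x k + lam (inr k)
        have hKy : K k ⬝ᵥ y = - ∑ x, lam (Sum.inl x) * K x k := by
          simp only [dotProduct]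
          rw [← Finset.sum_neg_distrib]
          refine Finset.sum_congr rfl fun j _ => ?_
          simp only [hy]
          rw [hskew k j]
          ring
        rw [hzdef, dotProduct_add, hKy, dotProduct_single, mul_one, hskew k i₀]
        linarith
      have hzi₀ : (1:ℝ) ≤ z i₀ := by
        have := hlam (Sum.inl i₀)
        simp only [hzdef, Pi.add_apply, Pi.single_eq_same, hy]
        linarith
      exact ⟨z, hz1, fun k => by rw [hz2 k]; exact hlam _,
        by have := hz2 i₀ ▸ hlam (Sum.inr i₀); nlinarith [hz2 i₀, hlam (Sum.inr i₀)]⟩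
  choose w hw1 hw2 hw3 using key
  refine ⟨∑ i₀, w i₀, ?_, ?_, ?_⟩
  · intro i
    rw [Finset.sum_apply]
    exact Finset.sum_nonneg fun i₀ _ => hw1 i₀ i
  · intro i
    rw [dotProduct_sum' (K i) w]
    exact Finset.sum_nonneg fun i₀ _ => hw2 i₀ i
  · intro i
    rw [Finset.sum_apply, dotProduct_sum' (K i) w, ← Finset.sum_add_distrib]
    exact Finset.sum_pos' (fun i₀ _ => add_nonneg (hw1 i₀ i) (hw2 i₀ i))
      ⟨i, Finset.mem_univ i, hw3 i⟩


/-- **Stiemke's lemma**: if no nonnegative combination of the rows `g a` is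
semipositive, then there is a strictly positive `y` with `∑ b, g a b * y b ≤ 0` for all `a`. -/
lemma stiemke {α β : Type} [Fintype α] [Fintype β] (g : α → β → ℝ)
    (h : ¬ ∃ x : α → ℝ, (∀ a, 0 ≤ x a) ∧ (∀ b, 0 ≤ ∑ a, x a * g a b) ∧
      (∃ b, 0 < ∑ a, x a * g a b)) :
    ∃ y : β → ℝ, (∀ b, 0 < y b) ∧ ∀ a, ∑ b, g a b * y b ≤ 0 := by
  classical
  set K : (α ⊕ β) → (α ⊕ β) → ℝ :=
    Sum.elim (fun a => Sum.elim (fun _ : α => 0) (fun b => -(g a b)))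
             (fun b => Sum.elim (fun a => g a b) (fun _ : β => 0)) with hK
  have hskew : ∀ p q, K p q = - K q p := by
    rintro (a | b) (a' | b') <;> simp [hK]
  obtain ⟨z, hz1, hz2, hz3⟩ := tucker K hskew
  set x : α → ℝ := fun a => z (Sum.inl a) with hx
  set y : β → ℝ := fun b => z (Sum.inr b) with hy2
  have hrow_b : ∀ b : β, K (Sum.inr b) ⬝ᵥ z = ∑ a, x a * g a b := by
    intro b
    rw [dotProduct, Fintype.sum_sum_type]
    simp [hK, mul_comm]
    rfl
  have hrow_a : ∀ a : α, K (Sum.inl a) ⬝ᵥ z = - ∑ b, g a b * y b := by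
    intro a
    rw [dotProduct, Fintype.sum_sum_type, ← Finset.sum_neg_distrib]
    simp [hK]
    rfl
  have hzero : ∀ b : β, ∑ a, x a * g a b = 0 := by
    intro b
    refine le_antisymm ?_ (by rw [← hrow_b b]; exact hz2 _)
    by_contra hlt
    push_neg at hlt
    exact h ⟨x, fun a => hz1 _, fun b' => by rw [← hrow_b b']; exact hz2 _, ⟨b, hlt⟩⟩
  refine ⟨y, ?_, ?_⟩
  · intro b
    have := hz3 (Sum.inr b)
    rw [hrow_b b, hzero b] at this
    simpa using this
  · intro a
    have := hz2 (Sum.inl a)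
    rw [hrow_a a] at this
    linarith


lemma sum_dite_subtype {T : Type} [Fintype T] (Y : Set T) [DecidablePred (· ∈ Y)]
    (F : {x // x ∈ Y} → ℝ) :
    ∑ τ : T, (if h : τ ∈ Y then F ⟨τ, h⟩ else 0) = ∑ t : {x // x ∈ Y}, F t := by
  have h1 : ∑ τ : T, (if h : τ ∈ Y then F ⟨τ, h⟩ else 0)
      = ∑ τ ∈ Y.toFinset, (if h : τ ∈ Y then F ⟨τ, h⟩ else 0) :=
    (Finset.sum_subset (Finset.subset_univ _)
      (fun x _ hx => dif_neg (by simpa [Set.mem_toFinset] using hx))).symm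
  rw [h1, Finset.sum_subtype Y.toFinset (fun x => Set.mem_toFinset)]
  exact Finset.sum_congr rfl fun t _ => by simp

end Helpers

/-- Pearce. `σ` is not weakly dominated by any mixed strategy with respect
to `Y` iff `σ` is a best response to some belief whose support is all of `Y`. -/
theorem not_weakly_dominated_iff_best_response_full_support
    {S : Fin n → Type} [∀ j, Fintype (S j)] [∀ j, Nonempty (S j)]
    (u : ∀ i : Fin n, (∀ j, S j) → ℝ) (i : Fin n) (σ : S i)
    (Y : Set (Oth S i)) (hY : Y.Nonempty) :
    (¬ ∃ ν : S i → ℝ, IsDist ν ∧ WDom u i ν σ Y) ↔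
      ∃ μ : Oth S i → ℝ, IsBelief μ ∧ (∀ τ, 0 < μ τ ↔ τ ∈ Y) ∧ BestResponse u i σ μ := by
  classical
  constructor
  · -- hard direction
    intro hLHS
    haveI : Nonempty {x // x ∈ Y} := hY.to_subtype
    set g : S i → Oth S i → ℝ := fun a τ => u i (ext i a τ) - u i (ext i σ τ) with hg
    have hyp : ¬ ∃ x : S i → ℝ, (∀ a, 0 ≤ x a) ∧
        (∀ t : {x // x ∈ Y}, 0 ≤ ∑ a, x a * g a ↑t) ∧
        (∃ t : {x // x ∈ Y}, 0 < ∑ a, x a * g a ↑t) := by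
      rintro ⟨x, hx0, hx1, b, hb⟩
      apply hLHS
      set s : ℝ := ∑ a, x a with hs
      have hs0 : 0 ≤ s := Finset.sum_nonneg fun a _ => hx0 a
      have hsne : s ≠ 0 := by
        intro h0
        have hxall : ∀ a ∈ Finset.univ, x a = 0 :=
          (Finset.sum_eq_zero_iff_of_nonneg (fun a _ => hx0 a)).mp (by rw [← hs, h0])
        have : ∑ a, x a * g a (↑b) = 0 :=
          Finset.sum_eq_zero fun a _ => by rw [hxall a (Finset.mem_univ a), zero_mul]
        rw [this] at hb
        exact lt_irrefl 0 hb
      have hspos : 0 < s := lt_of_le_of_ne hs0 (Ne.symm hsne)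
      set ν : S i → ℝ := fun a => x a / s with hν
      have hν1 : ∑ a, ν a = 1 := by
        simp only [hν]
        rw [← Finset.sum_div, ← hs, div_self hsne]
      have hkey : ∀ τ, EUmix u i ν τ - u i (ext i σ τ) = (∑ a, x a * g a τ) / s := by
        intro τ
        have e1 : EUmix u i ν τ - u i (ext i σ τ)
            = ∑ a, ν a * u i (ext i a τ) - (∑ a, ν a) * u i (ext i σ τ) := by
          rw [hν1, one_mul]; rfl
        rw [e1, Finset.sum_mul, ← Finset.sum_sub_distrib, Finset.sum_div]
        exact Finset.sum_congr rfl fun a _ => by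
          simp only [hν, hg]; field_simp
      refine ⟨ν, ⟨fun a => div_nonneg (hx0 a) hs0, hν1⟩, ?_, ?_⟩
      · intro τ hτ
        have := hkey τ
        have hnn : 0 ≤ (∑ a, x a * g a τ) / s :=
          div_nonneg (hx1 ⟨τ, hτ⟩) hs0
        linarith
      · refine ⟨↑b, b.2, ?_⟩
        have := hkey ↑b
        have hpos : 0 < (∑ a, x a * g a ↑b) / s := div_pos hb hspos
        linarith
    obtain ⟨y, hy, hyle⟩ := stiemke (fun a (t : {x // x ∈ Y}) => g a ↑t) hyp
    · set c : ℝ := ∑ t : {x // x ∈ Y}, y t with hc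
      have hcpos : 0 < c := Finset.sum_pos (fun t _ => hy t) Finset.univ_nonempty
      set μ : Oth S i → ℝ := fun τ => if h : τ ∈ Y then y ⟨τ, h⟩ / c else 0 with hμ
      have hμnn : ∀ τ, 0 ≤ μ τ := by
        intro τ
        by_cases h : τ ∈ Y
        · simp only [hμ, dif_pos h]
          exact div_nonneg (hy _).le hcpos.le
        · simp [hμ, dif_neg h]
      have hμsum : ∑ τ, μ τ = 1 := by
        simp only [hμ]
        rw [sum_dite_subtype Y (fun t => y t / c), ← Finset.sum_div, ← hc,
          div_self (ne_of_gt hcpos)]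
      refine ⟨μ, ⟨hμnn, hμsum⟩, ?_, ?_⟩
      · intro τ
        constructor
        · intro hpos
          by_contra h
          simp [hμ, dif_neg h] at hpos
        · intro h
          simp only [hμ, dif_pos h]
          exact div_pos (hy _) hcpos
      · intro σ'
        have hdiff : EU u i σ' μ - EU u i σ μ = ∑ τ, μ τ * g σ' τ := by
          simp only [EU, ← Finset.sum_sub_distrib]
          exact Finset.sum_congr rfl fun τ _ => by simp only [hg]; ring
        have hterm : ∀ τ, μ τ * g σ' τ
            = if h : τ ∈ Y then (y ⟨τ, h⟩ / c) * g σ' τ else 0 := by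
          intro τ
          by_cases h : τ ∈ Y <;> simp [hμ, h]
        have h2 : ∑ τ, μ τ * g σ' τ = ∑ t : {x // x ∈ Y}, (y t / c) * g σ' ↑t := by
          rw [Finset.sum_congr rfl fun τ _ => hterm τ,
            sum_dite_subtype Y (fun t => (y t / c) * g σ' ↑t)]
        have h3 : ∑ t : {x // x ∈ Y}, (y t / c) * g σ' ↑t
            = (∑ t : {x // x ∈ Y}, g σ' ↑t * y t) / c := by
          rw [Finset.sum_div]
          exact Finset.sum_congr rfl fun t _ => by ring
        have h4 : (∑ t : {x // x ∈ Y}, g σ' ↑t * y t) / c ≤ 0 :=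
          div_nonpos_of_nonpos_of_nonneg (hyle σ') hcpos.le
        have := hdiff
        rw [h2, h3] at this
        linarith
  · -- easy direction
    rintro ⟨μ, ⟨hμ0, hμ1⟩, hsupp, hBR⟩ ⟨ν, ⟨hν0, hν1⟩, hW1, τ', hτ', hstrict⟩
    set D : ℝ := ∑ τ, μ τ * (EUmix u i ν τ - u i (ext i σ τ)) with hD
    have hDpos : 0 < D := by
      refine Finset.sum_pos' (fun τ _ => ?_) ⟨τ', Finset.mem_univ τ', ?_⟩
      · by_cases hτY : τ ∈ Y
        · exact mul_nonneg (hμ0 τ) (sub_nonneg.mpr (hW1 τ hτY))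
        · have hz : μ τ = 0 :=
            le_antisymm (not_lt.mp (mt (hsupp τ).mp hτY)) (hμ0 τ)
          rw [hz, zero_mul]
      · exact mul_pos ((hsupp τ').mpr hτ') (sub_pos.mpr hstrict)
    have hswap : ∑ τ, μ τ * EUmix u i ν τ = ∑ a, ν a * EU u i a μ := by
      simp only [EUmix, EU, Finset.mul_sum]
      rw [Finset.sum_comm]
      exact Finset.sum_congr rfl fun a _ => Finset.sum_congr rfl fun τ _ => by ring
    have hDle : D ≤ 0 := by
      have e1 : D = ∑ τ, μ τ * EUmix u i ν τ - EU u i σ μ := by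
        simp only [hD, mul_sub, Finset.sum_sub_distrib]
        rfl
      rw [e1, hswap]
      have e2 : ∑ a, ν a * EU u i a μ ≤ ∑ a, ν a * EU u i σ μ :=
        Finset.sum_le_sum fun a _ => mul_le_mul_of_nonneg_left (hBR a) (hν0 a)
      have e3 : ∑ a, ν a * EU u i σ μ = EU u i σ μ := by
        rw [← Finset.sum_mul, hν1, one_mul]
      linarith
    linarith


end IA
end

section
/- For a pure strategy σ of player i in a finite normal-form game Γ, the following are equivalent: (a) σ is rationalizable; (b) there is an L1-measurable probability structure M appropriate for Γ and a state ω with s_i(ω) = σ and (M,ω) ⊨ E^k RAT for all k ≥ 0; (c) there is an L1-measurable probability structure M appropriate for Γ and a state ω with s_i(ω) = σ and (M,ω) ⊨ ⟨B_i⟩ E^k RAT for all k ≥ 0; (d) there is a probability structure M appropriate for Γ and a state ω with s_i(ω) = σ and (M,ω) ⊨ ⟨B_i⟩ E^k RAT for all k ≥ 0. -/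
open MeasureTheory

namespace IA

set_option linter.unusedVariables false

variable {n : ℕ}

variable {S : Fin n → Type}

/-! ### Probability structures appropriate for a game -/

/-- A probability structure appropriate for the game with strategy sets `S`. -/
structure PStruct (n : ℕ) (S : Fin n → Type) where
  Ω : Type
  F : MeasurableSpace Ω
  s : Ω → ∀ j, S j
  PR : Fin n → Ω → @Measure Ω F
  PR_prob : ∀ i ω, IsProbabilityMeasure (PR i ω)
  meas_play : ∀ (i : Fin n) (σ : S i), MeasurableSet[F] {ω | s ω i = σ}
  knows_play : ∀ i ω, PR i ω {ω' | s ω' i = s ω i} = 1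
  meas_PR : ∀ (i : Fin n) (π : @Measure Ω F), MeasurableSet[F] {ω | PR i ω = π}
  knows_PR : ∀ i ω, PR i ω {ω' | PR i ω' = PR i ω} = 1

section
variable [∀ j, Fintype (S j)]

/-- The belief of player `i` at state `ω` about the strategies of the other players,
i.e. the marginal of `PR_i(ω)` on `Σ_{-i}` via `s_{-i}`. -/
noncomputable def margBelief (M : PStruct n S) (i : Fin n) (ω : M.Ω) (τ : Oth S i) : ℝ :=
  (M.PR i ω {ω' | ∀ j : {j : Fin n // j ≠ i}, M.s ω' j.1 = τ j}).toReal

/-- `RAT_i` holds at `ω`: player `i`'s strategy at `ω` is a best response to the belief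
induced by `PR_i(ω)`. -/
def SatRAT (u : ∀ i : Fin n, (∀ j, S j) → ℝ) (M : PStruct n S) (i : Fin n) (ω : M.Ω) : Prop :=
  BestResponse u i (M.s ω i) (margBelief M i ω)

end

/-! ### The language L1 and its semantics -/

inductive L1 (n : ℕ) : Type where
  | tt : L1 n
  | RAT (i : Fin n) : L1 n
  | neg (φ : L1 n) : L1 n
  | and (φ ψ : L1 n) : L1 n
  | B (i : Fin n) (φ : L1 n) : L1 n
  | Bpos (i : Fin n) (φ : L1 n) : L1 n

def Sat1 [∀ j, Fintype (S j)] (u : ∀ i : Fin n, (∀ j, S j) → ℝ) :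
    L1 n → (M : PStruct n S) → M.Ω → Prop
  | .tt, _, _ => True
  | .RAT i, M, ω => SatRAT u M i ω
  | .neg φ, M, ω => ¬ Sat1 u φ M ω
  | .and φ ψ, M, ω => Sat1 u φ M ω ∧ Sat1 u ψ M ω
  | .B i φ, M, ω => ∃ A, MeasurableSet[M.F] A ∧ A ⊆ {ω' | Sat1 u φ M ω'} ∧ M.PR i ω A = 1
  | .Bpos i φ, M, ω => ∃ A, MeasurableSet[M.F] A ∧ A ⊆ {ω' | Sat1 u φ M ω'} ∧ 0 < M.PR i ω A

def conjList1 : List (L1 n) → L1 n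
  | [] => .tt
  | φ :: l => .and φ (conjList1 l)

/-- `RAT := RAT_1 ∧ ⋯ ∧ RAT_n`. -/
def RATall (n : ℕ) : L1 n := conjList1 ((List.finRange n).map .RAT)

/-- `E φ := B_1 φ ∧ ⋯ ∧ B_n φ`. -/
def EF : L1 n → L1 n := fun φ => conjList1 ((List.finRange n).map (fun i => .B i φ))

/-- `Ek n k` is the formula `E^k RAT`. -/
def Ek (n : ℕ) : ℕ → L1 n
  | 0 => RATall n
  | k+1 => EF (Ek n k)

/-! ### Auxiliary lemmas -/

set_option linter.unusedSectionVars false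

section AuxSem
variable {S : Fin n → Type} [∀ j, Fintype (S j)] (u : ∀ i : Fin n, (∀ j, S j) → ℝ)

lemma ext_self (i : Fin n) (σ : S i) (τ : Oth S i) : ext i σ τ i = σ := by
  simp [ext]

lemma ext_ne (i : Fin n) (σ : S i) (τ : Oth S i) (j : {j : Fin n // j ≠ i}) :
    ext i σ τ j.1 = τ j := by
  unfold ext
  rw [dif_neg j.2]

lemma sat_conjList (l : List (L1 n)) (M : PStruct n S) (ω : M.Ω) :
    Sat1 u (conjList1 l) M ω ↔ ∀ φ ∈ l, Sat1 u φ M ω := by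
  induction l with
  | nil => simp [conjList1, Sat1]
  | cons φ l ih => simp [conjList1, Sat1, ih]

lemma sat_EF (φ : L1 n) (M : PStruct n S) (ω : M.Ω) :
    Sat1 u (EF φ) M ω ↔ ∀ j, Sat1 u (L1.B j φ) M ω := by
  simp [EF, sat_conjList]

lemma sat_RATall (M : PStruct n S) (ω : M.Ω) :
    Sat1 u (RATall n) M ω ↔ ∀ j, SatRAT u M j ω := by
  simp [RATall, sat_conjList, Sat1]

lemma sat_B (j : Fin n) (φ : L1 n) (M : PStruct n S) (ω : M.Ω) :
    Sat1 u (L1.B j φ) M ω ↔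
      ∃ A, MeasurableSet[M.F] A ∧ A ⊆ {ω' | Sat1 u φ M ω'} ∧ M.PR j ω A = 1 := Iff.rfl

lemma sat_Ek_succ (k : ℕ) (M : PStruct n S) (ω : M.Ω) :
    Sat1 u (Ek n (k+1)) M ω ↔ ∀ j, Sat1 u (L1.B j (Ek n k)) M ω := by
  rw [show Ek n (k+1) = EF (Ek n k) from rfl, sat_EF]

end AuxSem

section AuxMeasure

lemma nonempty_of_ne_zero' {Ω : Type} {F : MeasurableSpace Ω} {μ : @Measure Ω F}
    {A : Set Ω} (hA : μ A ≠ 0) : A.Nonempty := by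
  rcases A.eq_empty_or_nonempty with h | h
  · subst h; exact absurd (measure_empty (μ := μ)) hA
  · exact h

lemma measure_inter_ne_zero {Ω : Type} {F : MeasurableSpace Ω} (μ : @Measure Ω F)
    [IsProbabilityMeasure μ] {A B : Set Ω} (hA : μ A ≠ 0) (hBm : MeasurableSet B)
    (hB : μ B = 1) : μ (A ∩ B) ≠ 0 := by
  have hsub : A ⊆ (A ∩ B) ∪ Bᶜ := by
    intro x hx
    by_cases h : x ∈ B
    · exact Or.inl ⟨hx, h⟩
    · exact Or.inr h
  have hcompl : μ Bᶜ = 0 := by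
    rw [prob_compl_eq_one_sub hBm, hB]
    simp
  intro h0
  apply hA
  have h1 := (measure_mono (μ := μ) hsub).trans (measure_union_le _ _)
  rw [h0, hcompl, add_zero] at h1
  exact le_antisymm h1 zero_le

variable {S : Fin n → Type} [∀ j, Fintype (S j)] (u : ∀ i : Fin n, (∀ j, S j) → ℝ)

lemma cyl_measurable (M : PStruct n S) (j : Fin n) (τ : Oth S j) :
    MeasurableSet[M.F] {ω' | ∀ j' : {j' : Fin n // j' ≠ j}, M.s ω' j'.1 = τ j'} := by
  have h : {ω' | ∀ j' : {j' : Fin n // j' ≠ j}, M.s ω' j'.1 = τ j'} =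
      ⋂ j' : {j' : Fin n // j' ≠ j}, {ω' | M.s ω' j'.1 = τ j'} := by
    ext ω'; simp
  rw [h]
  exact MeasurableSet.iInter fun j' => M.meas_play j'.1 (τ j')

lemma exists_witness (M : PStruct n S) (j : Fin n) (ω : M.Ω) {A : Set M.Ω}
    (hAm : MeasurableSet[M.F] A) (hA : M.PR j ω A ≠ 0) :
    ∃ ω', ω' ∈ A ∧ M.s ω' j = M.s ω j ∧ M.PR j ω' = M.PR j ω := by
  haveI := M.PR_prob j ω
  have h1 := measure_inter_ne_zero (M.PR j ω) hA (M.meas_play j (M.s ω j)) (M.knows_play j ω)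
  have h2 := measure_inter_ne_zero (M.PR j ω) h1 (M.meas_PR j (M.PR j ω)) (M.knows_PR j ω)
  obtain ⟨ω', hω'⟩ := nonempty_of_ne_zero' h2
  exact ⟨ω', hω'.1.1, hω'.1.2, hω'.2⟩

lemma margBelief_isBelief (M : PStruct n S) (j : Fin n) (ω : M.Ω) :
    IsBelief (margBelief M j ω) := by
  haveI := M.PR_prob j ω
  refine ⟨fun τ => ENNReal.toReal_nonneg, ?_⟩
  have hdisj : Pairwise (Function.onFun Disjoint fun τ : Oth S j =>
      {ω' : M.Ω | ∀ j', M.s ω' j'.1 = τ j'}) := by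
    intro τ τ' hne
    refine Set.disjoint_left.2 fun ω' h1 h2 => hne ?_
    funext j'
    rw [← h1 j', h2 j']
  have hunion : (⋃ τ : Oth S j, {ω' : M.Ω | ∀ j', M.s ω' j'.1 = τ j'}) = Set.univ := by
    ext ω'
    simp only [Set.mem_iUnion, Set.mem_univ, iff_true]
    exact ⟨fun j' => M.s ω' j'.1, fun j' => rfl⟩
  have h1 : ∑ τ : Oth S j, M.PR j ω {ω' | ∀ j', M.s ω' j'.1 = τ j'} = 1 := by
    rw [← tsum_fintype (L := SummationFilter.unconditional _), ← measure_iUnion hdisj (fun τ => cyl_measurable M j τ), hunion]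
    exact measure_univ
  have h2 : (∑ τ : Oth S j, M.PR j ω {ω' | ∀ j', M.s ω' j'.1 = τ j'}).toReal =
      ∑ τ : Oth S j, (M.PR j ω {ω' | ∀ j', M.s ω' j'.1 = τ j'}).toReal :=
    ENNReal.toReal_sum fun τ _ => measure_ne_top _ _
  unfold margBelief
  rw [← h2, h1, ENNReal.toReal_one]

lemma margBelief_congr (M : PStruct n S) (j : Fin n) {ω ω' : M.Ω}
    (h : M.PR j ω' = M.PR j ω) : margBelief M j ω' = margBelief M j ω := by
  funext τ
  unfold margBelief
  rw [h]

end AuxMeasure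

section AuxD
variable {S : Fin n → Type} [∀ j, Fintype (S j)]

/-- One round of "keep only best responses to beliefs supported on `X`". -/
def BRstep (u : ∀ i : Fin n, (∀ j, S j) → ℝ) (X : ∀ j : Fin n, Set (S j)) :
    ∀ j : Fin n, Set (S j) := fun j =>
  {σ' | ∃ μ : Oth S j → ℝ, IsBelief μ ∧ (∀ τ, 0 < μ τ → τ ∈ OthSet X j) ∧
    BestResponse u j σ' μ}

/-- Iterated deletion of never-best-responses. -/
def Dset (u : ∀ i : Fin n, (∀ j, S j) → ℝ) : ℕ → ∀ j : Fin n, Set (S j)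
  | 0 => fun _ => Set.univ
  | k+1 => BRstep u (Dset u k)

variable (u : ∀ i : Fin n, (∀ j, S j) → ℝ)

lemma BRstep_mono {X Y : ∀ j : Fin n, Set (S j)} (h : ∀ j, X j ⊆ Y j) (j : Fin n) :
    BRstep u X j ⊆ BRstep u Y j := by
  rintro σ' ⟨μ, h1, h2, h3⟩
  exact ⟨μ, h1, fun τ hτ j' => h j'.1 (h2 τ hτ j'), h3⟩

lemma Dset_antitone : ∀ (k : ℕ) (j : Fin n), Dset u (k+1) j ⊆ Dset u k j := by
  intro k
  induction k with
  | zero => intro j σ' _; trivial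
  | succ k ih => exact BRstep_mono u ih

lemma Dset_exists_fix : ∃ K, Dset u (K+1) = Dset u K := by
  by_contra hcon
  push_neg at hcon
  set N : ℕ → ℕ := fun k => ∑ j : Fin n, (Dset u k j).ncard with hN
  have hlt : ∀ k, N (k+1) < N k := by
    intro k
    have hle : ∀ j ∈ Finset.univ, (Dset u (k+1) j).ncard ≤ (Dset u k j).ncard :=
      fun j _ => Set.ncard_le_ncard (Dset_antitone u k j) (Set.toFinite _)
    rcases lt_or_eq_of_le (Finset.sum_le_sum hle) with h | h
    · exact h
    · exfalso
      apply hcon k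
      funext j
      exact Set.eq_of_subset_of_ncard_le (Dset_antitone u k j)
        ((Finset.sum_eq_sum_iff_of_le hle).1 h j (Finset.mem_univ j)).ge
        (Set.toFinite _)
  have hbound : ∀ k, N k + k ≤ N 0 := by
    intro k
    induction k with
    | zero => simp
    | succ k ih =>
      have := hlt k
      omega
  have := hbound (N 0 + 1)
  omega

lemma Dset_fix_all {K : ℕ} (hK : Dset u (K+1) = Dset u K) :
    ∀ m, K ≤ m → Dset u m = Dset u K := by
  intro m hm
  induction m with
  | zero =>
    have h0 : K = 0 := by omega
    rw [h0]
  | succ m ih =>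
    rcases Nat.lt_or_ge K (m+1) with h | h
    · have h' : K ≤ m := by omega
      calc Dset u (m+1) = BRstep u (Dset u m) := rfl
        _ = BRstep u (Dset u K) := by rw [ih h']
        _ = Dset u K := hK
    · have h1 : K = m + 1 := by omega
      rw [h1]

end AuxD

section AuxMain
variable {S : Fin n → Type} [∀ j, Fintype (S j)] (u : ∀ i : Fin n, (∀ j, S j) → ℝ)

lemma sub_lemma (M : PStruct n S) (m : ℕ) (j : Fin n) :
    ∀ ω : M.Ω, Sat1 u (Ek n (m+1)) M ω →
    ∃ ω', SatRAT u M j ω' ∧ M.s ω' j = M.s ω j ∧ M.PR j ω' = M.PR j ω := by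
  induction m with
  | zero =>
    intro ω h
    obtain ⟨A, hAm, hAsub, hA1⟩ := (sat_Ek_succ u 0 M ω).1 h j
    obtain ⟨ω', hω'A, hs, hPR⟩ := exists_witness M j ω hAm (by rw [hA1]; exact one_ne_zero)
    exact ⟨ω', (sat_RATall u M ω').1 (hAsub hω'A) j, hs, hPR⟩
  | succ m ih =>
    intro ω h
    obtain ⟨A, hAm, hAsub, hA1⟩ := (sat_Ek_succ u (m+1) M ω).1 h j
    obtain ⟨ω'', hω''A, hs, hPR⟩ := exists_witness M j ω hAm (by rw [hA1]; exact one_ne_zero)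
    obtain ⟨ω', h1, h2, h3⟩ := ih ω'' (hAsub hω''A)
    exact ⟨ω', h1, h2.trans hs, h3.trans hPR⟩

lemma mainD (M : PStruct n S) :
    ∀ (m : ℕ) (j : Fin n) (ω : M.Ω),
      Sat1 u (Ek n (m+1)) M ω → M.s ω j ∈ Dset u (m+1) j := by
  intro m
  induction m using Nat.strong_induction_on with
  | _ m ih =>
    intro j ω h
    obtain ⟨ω', hRAT, hs, hPR⟩ := sub_lemma u M m j ω h
    have hBR : BestResponse u j (M.s ω j) (margBelief M j ω) := by
      have h0 : BestResponse u j (M.s ω' j) (margBelief M j ω') := hRAT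
      rwa [hs, margBelief_congr M j hPR] at h0
    refine ⟨margBelief M j ω, margBelief_isBelief M j ω, ?_, hBR⟩
    intro τ hτ
    match m with
    | 0 => intro j'; trivial
    | Nat.succ m' =>
      obtain ⟨A, hAm, hAsub, hA1⟩ := (sat_Ek_succ u (m'+1) M ω).1 h j
      have hcyl : M.PR j ω {ω₃ | ∀ j', M.s ω₃ j'.1 = τ j'} ≠ 0 := by
        intro h0
        unfold margBelief at hτ
        rw [h0] at hτ
        simp at hτ
      haveI := M.PR_prob j ω
      obtain ⟨ω₃, hω₃cyl, hω₃A⟩ :=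
        nonempty_of_ne_zero' (measure_inter_ne_zero (M.PR j ω) hcyl hAm hA1)
      intro j'
      have := ih m' (by omega) j'.1 ω₃ (hAsub hω₃A)
      rwa [hω₃cyl j'] at this

end AuxMain

section AuxConstruct
variable {S : Fin n → Type} [∀ j, Fintype (S j)]

/-- The measure used by player `j` at state `ω` in the canonical structure built from
a family of beliefs `μf`. -/
noncomputable def cMeasure (μf : ∀ j : Fin n, S j → Oth S j → ℝ) (j : Fin n)
    (ω : ∀ j, S j) : @Measure (∀ j, S j) ⊤ :=
  ∑ τ : Oth S j, ENNReal.ofReal (μf j (ω j) τ) • @Measure.dirac _ ⊤ (ext j (ω j) τ)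

lemma cMeasure_apply (μf : ∀ j : Fin n, S j → Oth S j → ℝ) (j : Fin n)
    (ω : ∀ j, S j) (A : Set (∀ j, S j)) :
    cMeasure μf j ω A =
      ∑ τ : Oth S j, ENNReal.ofReal (μf j (ω j) τ) * A.indicator 1 (ext j (ω j) τ) := by
  letI : MeasurableSpace (∀ j, S j) := ⊤
  unfold cMeasure
  rw [Measure.finset_sum_apply]
  refine Finset.sum_congr rfl fun τ _ => ?_
  rw [Measure.smul_apply, smul_eq_mul,
    Measure.dirac_apply' _ MeasurableSpace.measurableSet_top]

lemma cMeasure_univ (μf : ∀ j : Fin n, S j → Oth S j → ℝ) (j : Fin n)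
    (ω : ∀ j, S j) (hb : IsBelief (μf j (ω j))) :
    cMeasure μf j ω Set.univ = 1 := by
  rw [cMeasure_apply]
  simp only [Set.indicator_univ, Pi.one_apply, mul_one]
  rw [← ENNReal.ofReal_sum_of_nonneg (fun τ _ => hb.1 τ), hb.2, ENNReal.ofReal_one]

lemma cMeasure_coord (μf : ∀ j : Fin n, S j → Oth S j → ℝ) (j : Fin n)
    (ω : ∀ j, S j) (hb : IsBelief (μf j (ω j))) :
    cMeasure μf j ω {ω' | ω' j = ω j} = 1 := by
  rw [cMeasure_apply]
  have h : ∀ τ : Oth S j, ext j (ω j) τ ∈ {ω' : ∀ j, S j | ω' j = ω j} :=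
    fun τ => ext_self j (ω j) τ
  calc ∑ τ : Oth S j, ENNReal.ofReal (μf j (ω j) τ) *
        {ω' : ∀ j, S j | ω' j = ω j}.indicator 1 (ext j (ω j) τ)
      = ∑ τ : Oth S j, ENNReal.ofReal (μf j (ω j) τ) := by
        refine Finset.sum_congr rfl fun τ _ => ?_
        rw [Set.indicator_of_mem (h τ), Pi.one_apply, mul_one]
    _ = 1 := by
        rw [← ENNReal.ofReal_sum_of_nonneg (fun τ _ => hb.1 τ), hb.2, ENNReal.ofReal_one]

lemma cMeasure_congr (μf : ∀ j : Fin n, S j → Oth S j → ℝ) (j : Fin n)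
    {ω ω' : ∀ j, S j} (h : ω' j = ω j) : cMeasure μf j ω' = cMeasure μf j ω := by
  unfold cMeasure
  rw [h]

lemma cMeasure_cyl (μf : ∀ j : Fin n, S j → Oth S j → ℝ) (j : Fin n)
    (ω : ∀ j, S j) (τ : Oth S j) :
    cMeasure μf j ω {ω' | ∀ j' : {j' : Fin n // j' ≠ j}, ω' j'.1 = τ j'} =
      ENNReal.ofReal (μf j (ω j) τ) := by
  classical
  rw [cMeasure_apply]
  have hmem : ∀ τ' : Oth S j,
      ext j (ω j) τ' ∈ {ω' : ∀ j, S j | ∀ j' : {j' : Fin n // j' ≠ j}, ω' j'.1 = τ j'} ↔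
        τ' = τ := by
    intro τ'
    constructor
    · intro hmem
      funext j'
      rw [← ext_ne j (ω j) τ' j']
      exact hmem j'
    · rintro rfl j'
      exact ext_ne j (ω j) τ' j'
  have hcong : ∀ τ' : Oth S j, ENNReal.ofReal (μf j (ω j) τ') *
      ({ω' : ∀ j, S j | ∀ j' : {j' : Fin n // j' ≠ j}, ω' j'.1 = τ j'}.indicator 1
        (ext j (ω j) τ')) = if τ' = τ then ENNReal.ofReal (μf j (ω j) τ') else 0 := by
    intro τ'
    by_cases h : τ' = τ
    · rw [Set.indicator_of_mem ((hmem τ').2 h), if_pos h, Pi.one_apply, mul_one]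
    · rw [Set.indicator_of_notMem (fun hc => h ((hmem τ').1 hc)), if_neg h, mul_zero]
  rw [Finset.sum_congr rfl fun τ' _ => hcong τ']
  simp

end AuxConstruct

section AuxStruct
variable {S : Fin n → Type} [∀ j, Fintype (S j)]

/-- The canonical probability structure built from a family of beliefs. -/
noncomputable def cStruct (μf : ∀ j : Fin n, S j → Oth S j → ℝ)
    (hb : ∀ (j : Fin n) (σj : S j), IsBelief (μf j σj)) : PStruct n S where
  Ω := ∀ j, S j
  F := ⊤
  s := id
  PR := cMeasure μf
  PR_prob := fun j ω => ⟨cMeasure_univ μf j ω (hb j (ω j))⟩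
  meas_play := fun _ _ => MeasurableSpace.measurableSet_top
  knows_play := fun j ω => cMeasure_coord μf j ω (hb j (ω j))
  meas_PR := fun _ _ => MeasurableSpace.measurableSet_top
  knows_PR := fun j ω => by
    haveI : IsProbabilityMeasure (cMeasure μf j ω) := ⟨cMeasure_univ μf j ω (hb j (ω j))⟩
    refine le_antisymm prob_le_one ?_
    rw [← cMeasure_coord μf j ω (hb j (ω j))]
    exact measure_mono fun ω' h' => cMeasure_congr μf j h'

lemma cStruct_margBelief (μf : ∀ j : Fin n, S j → Oth S j → ℝ)
    (hb : ∀ (j : Fin n) (σj : S j), IsBelief (μf j σj)) (j : Fin n)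
    (ω : (cStruct μf hb).Ω) : margBelief (cStruct μf hb) j ω = μf j (ω j) := by
  funext τ
  unfold margBelief
  have h : (cStruct μf hb).PR j ω
      {ω' | ∀ j' : {j' : Fin n // j' ≠ j}, (cStruct μf hb).s ω' j'.1 = τ j'} =
      ENNReal.ofReal (μf j (ω j) τ) := cMeasure_cyl μf j ω τ
  rw [h, ENNReal.toReal_ofReal ((hb j (ω j)).1 τ)]

variable [∀ j, Nonempty (S j)]

lemma construct (u : ∀ i : Fin n, (∀ j, S j) → ℝ) (i : Fin n) (σ : S i)
    (h : Rationalizable u i σ) :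
    ∃ (M : PStruct n S) (ω : M.Ω),
      (∀ φ : L1 n, MeasurableSet[M.F] {ω' | Sat1 u φ M ω'}) ∧
      M.s ω i = σ ∧ ∀ k : ℕ, Sat1 u (Ek n k) M ω := by
  classical
  obtain ⟨Z, μ, hσZ, hZ⟩ := h
  set μ' : ∀ j : Fin n, S j → Oth S j → ℝ := fun j σj =>
    if σj ∈ Z j then μ j σj
    else fun τ => if τ = Classical.arbitrary (Oth S j) then 1 else 0 with hμ'
  have hbext : ∀ (j : Fin n) (σj : S j), σj ∈ Z j → μ' j σj = μ j σj := by
    intro j σj hσj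
    rw [hμ']
    simp only [if_pos hσj]
  have hb : ∀ (j : Fin n) (σj : S j), IsBelief (μ' j σj) := by
    intro j σj
    by_cases hσj : σj ∈ Z j
    · rw [hbext j σj hσj]
      exact (hZ j σj hσj).1
    · rw [hμ']
      simp only [if_neg hσj]
      constructor
      · intro τ
        by_cases hτ : τ = Classical.arbitrary (Oth S j) <;> simp [hτ]
      · simp [Finset.sum_ite_eq']
  set M : PStruct n S := cStruct μ' hb with hM
  set ZP : Set (∀ j, S j) := {ω | ∀ j, ω j ∈ Z j} with hZPdef
  -- `RAT` holds everywhere in `ZP`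
  have hRAT : ∀ (j : Fin n) (ω : ∀ j, S j), ω ∈ ZP → SatRAT u M j ω := by
    intro j ω hω
    have h1 : margBelief M j ω = μ j (ω j) := by
      have h2 : margBelief M j ω = μ' j (ω j) := cStruct_margBelief μ' hb j ω
      rw [h2, hbext j (ω j) (hω j)]
    show BestResponse u j (M.s ω j) (margBelief M j ω)
    rw [h1]
    exact (hZ j (ω j) (hω j)).2.2
  -- `ZP` has probability one at every state of `ZP`
  have hZP1 : ∀ (j : Fin n) (ω : ∀ j, S j), ω ∈ ZP → cMeasure μ' j ω ZP = 1 := by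
    intro j ω hω
    rw [cMeasure_apply]
    have hterm : ∀ τ : Oth S j,
        ENNReal.ofReal (μ' j (ω j) τ) * ZP.indicator 1 (ext j (ω j) τ) =
          ENNReal.ofReal (μ' j (ω j) τ) := by
      intro τ
      by_cases hpos : 0 < μ j (ω j) τ
      · have hmem : ext j (ω j) τ ∈ ZP := by
          intro j'
          rcases eq_or_ne j' j with rfl | hne
          · rw [ext_self]
            exact hω j'
          · rw [ext_ne j (ω j) τ ⟨j', hne⟩]
            exact (hZ j (ω j) (hω j)).2.1 τ hpos ⟨j', hne⟩
        rw [Set.indicator_of_mem hmem, Pi.one_apply, mul_one]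
      · have h0 : μ' j (ω j) τ = 0 := by
          rw [hbext j (ω j) (hω j)]
          exact le_antisymm (not_lt.1 hpos) ((hZ j (ω j) (hω j)).1.1 τ)
        rw [h0]
        simp
    rw [Finset.sum_congr rfl fun τ _ => hterm τ,
      ← ENNReal.ofReal_sum_of_nonneg (fun τ _ => (hb j (ω j)).1 τ), (hb j (ω j)).2,
      ENNReal.ofReal_one]
  -- `E^k RAT` holds everywhere in `ZP`
  have hsat : ∀ k : ℕ, ∀ ω ∈ ZP, Sat1 u (Ek n k) M ω := by
    intro k
    induction k with
    | zero =>
      intro ω hω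
      exact (sat_RATall u M ω).2 fun j => hRAT j ω hω
    | succ k ih =>
      intro ω hω
      refine (sat_Ek_succ u k M ω).2 fun j =>
        ⟨ZP, MeasurableSpace.measurableSet_top, fun ω' hω' => ih ω' hω', hZP1 j ω hω⟩
  -- pick a state in `ZP` where `i` plays `σ`
  have hsum : ∑ τ : Oth S i, μ i σ τ ≠ 0 := by
    rw [(hZ i σ hσZ).1.2]
    exact one_ne_zero
  obtain ⟨τ₀, -, hτ₀⟩ := Finset.exists_ne_zero_of_sum_ne_zero hsum
  have hτ₀pos : 0 < μ i σ τ₀ := lt_of_le_of_ne ((hZ i σ hσZ).1.1 τ₀) (Ne.symm hτ₀)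
  have hτ₀Z : τ₀ ∈ OthSet Z i := (hZ i σ hσZ).2.1 τ₀ hτ₀pos
  have hω₀ : ext i σ τ₀ ∈ ZP := by
    intro j
    rcases eq_or_ne j i with rfl | hne
    · rw [ext_self]
      exact hσZ
    · rw [ext_ne i σ τ₀ ⟨j, hne⟩]
      exact hτ₀Z ⟨j, hne⟩
  exact ⟨M, ext i σ τ₀, fun φ => MeasurableSpace.measurableSet_top, ext_self i σ τ₀,
    fun k => hsat k (ext i σ τ₀) hω₀⟩

end AuxStruct

/-- Theorem: characterization of rationalizability. -/
theorem rationalizable_characterization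
    {S : Fin n → Type} [∀ j, Fintype (S j)] [∀ j, Nonempty (S j)]
    (u : ∀ i : Fin n, (∀ j, S j) → ℝ) (i : Fin n) (σ : S i) :
    (Rationalizable u i σ ↔
      ∃ (M : PStruct n S) (ω : M.Ω),
        (∀ φ : L1 n, MeasurableSet[M.F] {ω' | Sat1 u φ M ω'}) ∧
        M.s ω i = σ ∧ ∀ k : ℕ, Sat1 u (Ek n k) M ω) ∧
    ((∃ (M : PStruct n S) (ω : M.Ω),
        (∀ φ : L1 n, MeasurableSet[M.F] {ω' | Sat1 u φ M ω'}) ∧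
        M.s ω i = σ ∧ ∀ k : ℕ, Sat1 u (Ek n k) M ω) ↔
      ∃ (M : PStruct n S) (ω : M.Ω),
        (∀ φ : L1 n, MeasurableSet[M.F] {ω' | Sat1 u φ M ω'}) ∧
        M.s ω i = σ ∧ ∀ k : ℕ, Sat1 u (.Bpos i (Ek n k)) M ω) ∧
    ((∃ (M : PStruct n S) (ω : M.Ω),
        (∀ φ : L1 n, MeasurableSet[M.F] {ω' | Sat1 u φ M ω'}) ∧
        M.s ω i = σ ∧ ∀ k : ℕ, Sat1 u (.Bpos i (Ek n k)) M ω) ↔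
      ∃ (M : PStruct n S) (ω : M.Ω),
        M.s ω i = σ ∧ ∀ k : ℕ, Sat1 u (.Bpos i (Ek n k)) M ω) := by
  classical
  -- (b) → (c)
  have hbc : (∃ (M : PStruct n S) (ω : M.Ω),
        (∀ φ : L1 n, MeasurableSet[M.F] {ω' | Sat1 u φ M ω'}) ∧
        M.s ω i = σ ∧ ∀ k : ℕ, Sat1 u (Ek n k) M ω) →
      (∃ (M : PStruct n S) (ω : M.Ω),
        (∀ φ : L1 n, MeasurableSet[M.F] {ω' | Sat1 u φ M ω'}) ∧
        M.s ω i = σ ∧ ∀ k : ℕ, Sat1 u (.Bpos i (Ek n k)) M ω) := by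
    rintro ⟨M, ω, hmeas, hs, hk⟩
    refine ⟨M, ω, hmeas, hs, fun k => ?_⟩
    obtain ⟨A, hAm, hAsub, hA1⟩ := (sat_Ek_succ u k M ω).1 (hk (k+1)) i
    exact ⟨A, hAm, hAsub, by rw [hA1]; exact zero_lt_one⟩
  -- (c) → (d)
  have hcd : (∃ (M : PStruct n S) (ω : M.Ω),
        (∀ φ : L1 n, MeasurableSet[M.F] {ω' | Sat1 u φ M ω'}) ∧
        M.s ω i = σ ∧ ∀ k : ℕ, Sat1 u (.Bpos i (Ek n k)) M ω) →
      (∃ (M : PStruct n S) (ω : M.Ω),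
        M.s ω i = σ ∧ ∀ k : ℕ, Sat1 u (.Bpos i (Ek n k)) M ω) := by
    rintro ⟨M, ω, -, hs, hk⟩
    exact ⟨M, ω, hs, hk⟩
  -- (d) → (a)
  have hda : (∃ (M : PStruct n S) (ω : M.Ω),
        M.s ω i = σ ∧ ∀ k : ℕ, Sat1 u (.Bpos i (Ek n k)) M ω) →
      Rationalizable u i σ := by
    rintro ⟨M, ω, hs, hk⟩
    have hσD : ∀ k : ℕ, σ ∈ Dset u k i := by
      intro k
      cases k with
      | zero => trivial
      | succ k =>
        obtain ⟨A, hAm, hAsub, hpos⟩ := hk (k+1)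
        obtain ⟨ω', hω'A, hs', hPR'⟩ := exists_witness M i ω hAm hpos.ne'
        have hD := mainD u M k i ω' (hAsub hω'A)
        rwa [hs', hs] at hD
    obtain ⟨K, hK⟩ := Dset_exists_fix u
    have hfix : ∀ (j : Fin n), ∀ σ' ∈ Dset u K j, ∃ μ0 : Oth S j → ℝ,
        IsBelief μ0 ∧ (∀ τ, 0 < μ0 τ → τ ∈ OthSet (Dset u K) j) ∧
          BestResponse u j σ' μ0 := by
      intro j σ' hσ'
      have h1 : σ' ∈ Dset u (K+1) j := by rw [hK]; exact hσ'
      exact h1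
    choose! μfun h1 h2 h3 using hfix
    exact ⟨Dset u K, μfun, hσD K, fun j σ' hσ' => ⟨h1 j σ' hσ', h2 j σ' hσ', h3 j σ' hσ'⟩⟩
  -- (a) → (b)
  have hab := construct u i σ
  exact ⟨⟨hab, fun h => hda (hcd (hbc h))⟩, ⟨hbc, fun h => hab (hda (hcd h))⟩,
    ⟨hcd, fun h => hbc (hab (hda h))⟩⟩

end IA
end

section
/- If a formula φ ∈ L4(Γ) is satisfiable in some L4-measurable probability structure appropriate for Γ, then there exist an L4-measurable probability structure M appropriate for Γ and a state ω such that (M,ω) ⊨ φ, the singleton {ω} is measurable, and PR_j(ω)({ω}) = 0 for every player j = 1,…,n. -/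
open MeasureTheory

namespace IA

set_option linter.unusedVariables false

variable {n : ℕ}

variable {S : Fin n → Type}

/-! ### The language L4 (countable conjunctions and `pr_i(φ) > α` for real `α ∈ [0,1]`) -/

inductive L4 (n : ℕ) (S : Fin n → Type) : Type where
  | tt : L4 n S
  | RAT (i : Fin n) : L4 n S
  | play (i : Fin n) (σ : S i) : L4 n S
  | neg (φ : L4 n S) : L4 n S
  | and (φ ψ : L4 n S) : L4 n S
  | B (i : Fin n) (φ : L4 n S) : L4 n S
  | Bpos (i : Fin n) (φ : L4 n S) : L4 n S
  | diam (φ : L4 n S) : L4 n S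
  | conj (f : ℕ → L4 n S) : L4 n S
  | prGt (i : Fin n) (α : Set.Icc (0:ℝ) 1) (φ : L4 n S) : L4 n S

def Sat4 [∀ j, Fintype (S j)] (u : ∀ i : Fin n, (∀ j, S j) → ℝ) :
    L4 n S → (M : PStruct n S) → M.Ω → Prop
  | .tt, _, _ => True
  | .RAT i, M, ω => SatRAT u M i ω
  | .play i σ, M, ω => M.s ω i = σ
  | .neg φ, M, ω => ¬ Sat4 u φ M ω
  | .and φ ψ, M, ω => Sat4 u φ M ω ∧ Sat4 u ψ M ω
  | .B i φ, M, ω => ∃ A, MeasurableSet[M.F] A ∧ A ⊆ {ω' | Sat4 u φ M ω'} ∧ M.PR i ω A = 1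
  | .Bpos i φ, M, ω => ∃ A, MeasurableSet[M.F] A ∧ A ⊆ {ω' | Sat4 u φ M ω'} ∧ 0 < M.PR i ω A
  | .diam φ, _, _ => ∃ (M' : PStruct n S) (ω' : M'.Ω), Sat4 u φ M' ω'
  | .conj f, M, ω => ∀ m, Sat4 u (f m) M ω
  | .prGt i α φ, M, ω => (α : ℝ) < (M.PR i ω {ω' | Sat4 u φ M ω'}).toReal

def conjList4 : List (L4 n S) → L4 n S
  | [] => .tt
  | φ :: l => .and φ (conjList4 l)

noncomputable def conjFin4 {α : Type} [Fintype α] (f : α → L4 n S) : L4 n S :=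
  conjList4 (Finset.univ.toList.map f)

/-- material implication `φ ⇒ ψ` -/
def impF4 (φ ψ : L4 n S) : L4 n S := .neg (.and φ (.neg ψ))

section Dupe

variable {S : Fin n → Type}

/-- In `α ⊕ Unit`, a set is measurable iff its `inl`-preimage is. -/
lemma measSum {α : Type} [MeasurableSpace α] {B : Set (α ⊕ Unit)}
    (h : MeasurableSet (Sum.inl ⁻¹' B)) : MeasurableSet B :=
  measurableSet_sum_iff.2 ⟨h, Subsingleton.measurableSet⟩

lemma map_inl_inj {α : Type} [MeasurableSpace α] :
    Function.Injective (Measure.map (Sum.inl : α → α ⊕ Unit)) := by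
  intro μ ν h
  ext A hA
  have h1 : ∀ ρ : Measure α, Measure.map (Sum.inl : α → α ⊕ Unit) ρ (Sum.inl '' A) = ρ A := by
    intro ρ
    rw [Measure.map_apply measurable_inl hA.inl_image, Sum.inl_injective.preimage_image]
  rw [← h1 μ, ← h1 ν, h]

/-- The "retraction" map from the duplicated space back to `M.Ω`. -/
def retr (M : PStruct n S) (ω₀ : M.Ω) : M.Ω ⊕ Unit → M.Ω :=
  Sum.elim id (fun _ => ω₀)

lemma pre_PR (M : PStruct n S) (ω₀ : M.Ω) (i : Fin n) (ρ : @Measure M.Ω M.F) :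
    letI := M.F
    (Sum.inl ⁻¹' {x : M.Ω ⊕ Unit |
        Measure.map (Sum.inl : M.Ω → M.Ω ⊕ Unit) (M.PR i (retr M ω₀ x)) =
        Measure.map Sum.inl ρ}) = {ω' | M.PR i ω' = ρ} := by
  letI := M.F
  ext ω'
  simp only [Set.mem_preimage, Set.mem_setOf_eq, retr, Sum.elim_inl, id]
  exact ⟨fun hh => map_inl_inj hh, fun hh => by rw [hh]⟩

lemma measPR_aux (M : PStruct n S) (ω₀ : M.Ω) (i : Fin n) :
    letI := M.F
    ∀ π : Measure (M.Ω ⊕ Unit),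
    MeasurableSet {x : M.Ω ⊕ Unit |
      Measure.map (Sum.inl : M.Ω → M.Ω ⊕ Unit) (M.PR i (retr M ω₀ x)) = π} := by
  letI := M.F
  intro π
  by_cases h : ∃ ρ : Measure M.Ω, Measure.map (Sum.inl : M.Ω → M.Ω ⊕ Unit) ρ = π
  · obtain ⟨ρ, rfl⟩ := h
    exact measSum ((pre_PR M ω₀ i ρ) ▸ M.meas_PR i ρ)
  · have he : {x : M.Ω ⊕ Unit |
        Measure.map (Sum.inl : M.Ω → M.Ω ⊕ Unit) (M.PR i (retr M ω₀ x)) = π} = ∅ := by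
      ext x
      simp only [Set.mem_setOf_eq, Set.mem_empty_iff_false, iff_false]
      exact fun hh => h ⟨_, hh⟩
    rw [he]
    exact MeasurableSet.empty

lemma knowsPR_aux (M : PStruct n S) (ω₀ : M.Ω) (i : Fin n) (x : M.Ω ⊕ Unit) :
    letI := M.F
    Measure.map (Sum.inl : M.Ω → M.Ω ⊕ Unit) (M.PR i (retr M ω₀ x)) {x' : M.Ω ⊕ Unit |
      Measure.map (Sum.inl : M.Ω → M.Ω ⊕ Unit) (M.PR i (retr M ω₀ x')) =
      Measure.map Sum.inl (M.PR i (retr M ω₀ x))} = 1 := by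
  letI := M.F
  rw [Measure.map_apply measurable_inl (measPR_aux M ω₀ i _), pre_PR M ω₀ i _]
  exact M.knows_PR i (retr M ω₀ x)

/-- The probability structure obtained from `M` by adjoining a duplicate of the state `ω₀`
which every player assigns probability `0` (all beliefs are pushed into the original copy). -/
noncomputable def dupe (M : PStruct n S) (ω₀ : M.Ω) : PStruct n S :=
  letI := M.F
  { Ω := M.Ω ⊕ Unit
    F := inferInstance
    s := fun x => M.s (retr M ω₀ x)
    PR := fun i x => Measure.map Sum.inl (M.PR i (retr M ω₀ x))
    PR_prob := fun i x => by
      haveI := M.PR_prob i (retr M ω₀ x)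
      exact Measure.isProbabilityMeasure_map measurable_inl.aemeasurable
    meas_play := fun i σ => by
      exact measSum (M.meas_play i σ)
    knows_play := fun i x => by
      beta_reduce
      have hm : MeasurableSet[M.F]
          (Sum.inl ⁻¹' {x' : M.Ω ⊕ Unit | M.s (retr M ω₀ x') i = M.s (retr M ω₀ x) i}) :=
        M.meas_play i (M.s (retr M ω₀ x) i)
      rw [Measure.map_apply measurable_inl (measSum hm)]
      exact M.knows_play i (retr M ω₀ x)
    meas_PR := fun i π => measPR_aux M ω₀ i π
    knows_PR := fun i x => knowsPR_aux M ω₀ i x }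

end Dupe


lemma dupe_PR (M : PStruct n S) (ω₀ : M.Ω) (i : Fin n) (x : (dupe M ω₀).Ω)
    {B : Set (M.Ω ⊕ Unit)} (hB : MeasurableSet[M.F] (Sum.inl ⁻¹' B)) :
    (dupe M ω₀).PR i x B = M.PR i (retr M ω₀ x) (Sum.inl ⁻¹' B) := by
  letI := M.F
  exact Measure.map_apply measurable_inl (measSum hB)

lemma meas_prof (M : PStruct n S) (i : Fin n) (τ : Oth S i) :
    MeasurableSet[M.F] {ω' | ∀ j : {j : Fin n // j ≠ i}, M.s ω' j.1 = τ j} := by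
  letI := M.F
  have : {ω' | ∀ j : {j : Fin n // j ≠ i}, M.s ω' j.1 = τ j} =
      ⋂ j : {j : Fin n // j ≠ i}, {ω' | M.s ω' j.1 = τ j} := by
    ext ω'; simp [Set.mem_iInter]
  rw [this]
  exact MeasurableSet.iInter (fun j => M.meas_play j.1 (τ j))

lemma dupe_marg [∀ j, Fintype (S j)] (M : PStruct n S) (ω₀ : M.Ω) (i : Fin n)
    (x : (dupe M ω₀).Ω) :
    margBelief (dupe M ω₀) i x = margBelief M i (retr M ω₀ x) := by
  funext τ
  unfold margBelief
  have h := dupe_PR M ω₀ i x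
    (B := {ω' : M.Ω ⊕ Unit | ∀ j : {j : Fin n // j ≠ i}, (dupe M ω₀).s ω' j.1 = τ j})
    (meas_prof M i τ)
  calc ((dupe M ω₀).PR i x {ω' | ∀ j : {j : Fin n // j ≠ i}, (dupe M ω₀).s ω' j.1 = τ j}).toReal
      = ((M.PR i (retr M ω₀ x)) (Sum.inl ⁻¹'
          {ω' : M.Ω ⊕ Unit | ∀ j : {j : Fin n // j ≠ i}, (dupe M ω₀).s ω' j.1 = τ j})).toReal := by
        exact congrArg ENNReal.toReal h
    _ = ((M.PR i (retr M ω₀ x)) {ω' | ∀ j : {j : Fin n // j ≠ i}, M.s ω' j.1 = τ j}).toReal := rfl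

lemma sat_dupe [∀ j, Fintype (S j)] (u : ∀ i : Fin n, (∀ j, S j) → ℝ) (M : PStruct n S)
    (hM : ∀ ψ : L4 n S, MeasurableSet[M.F] {ω' | Sat4 u ψ M ω'}) (ω₀ : M.Ω) :
    ∀ (ψ : L4 n S) (x : (dupe M ω₀).Ω), Sat4 u ψ (dupe M ω₀) x ↔ Sat4 u ψ M (retr M ω₀ x) := by
  letI := M.F
  intro ψ
  induction ψ with
  | tt => intro x; exact Iff.rfl
  | RAT i =>
    intro x
    simp only [Sat4]
    unfold SatRAT
    rw [dupe_marg M ω₀ i x]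
    exact Iff.rfl
  | play i σ => intro x; exact Iff.rfl
  | neg φ ih => intro x; simp only [Sat4]; exact not_congr (ih x)
  | and φ ψ ihφ ihψ => intro x; simp only [Sat4]; exact and_congr (ihφ x) (ihψ x)
  | B i φ ih =>
    intro x
    simp only [Sat4]
    constructor
    · rintro ⟨A, hA, hsub, h1⟩
      refine ⟨Sum.inl ⁻¹' A, measurable_inl hA, ?_, ?_⟩
      · intro ω' hω'
        exact (ih (Sum.inl ω')).1 (hsub hω')
      · rw [← dupe_PR M ω₀ i x (measurable_inl hA)]
        exact h1
    · rintro ⟨A, hA, hsub, h1⟩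
      have hpre : MeasurableSet[M.F] (Sum.inl ⁻¹' (Sum.inl '' A : Set (M.Ω ⊕ Unit))) := by
        rw [Sum.inl_injective.preimage_image]; exact hA
      refine ⟨Sum.inl '' A, measSum hpre, ?_, ?_⟩
      · rintro x' ⟨ω', hω', rfl⟩
        exact (ih (Sum.inl ω')).2 (hsub hω')
      · exact (dupe_PR M ω₀ i x hpre).trans
          ((congrArg (fun s => M.PR i (retr M ω₀ x) s) (Sum.inl_injective.preimage_image A)).trans h1)
  | Bpos i φ ih =>
    intro x
    simp only [Sat4]
    constructor
    · rintro ⟨A, hA, hsub, h1⟩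
      refine ⟨Sum.inl ⁻¹' A, measurable_inl hA, ?_, ?_⟩
      · intro ω' hω'
        exact (ih (Sum.inl ω')).1 (hsub hω')
      · rw [← dupe_PR M ω₀ i x (measurable_inl hA)]
        exact h1
    · rintro ⟨A, hA, hsub, h1⟩
      have hpre : MeasurableSet[M.F] (Sum.inl ⁻¹' (Sum.inl '' A : Set (M.Ω ⊕ Unit))) := by
        rw [Sum.inl_injective.preimage_image]; exact hA
      refine ⟨Sum.inl '' A, measSum hpre, ?_, ?_⟩
      · rintro x' ⟨ω', hω', rfl⟩
        exact (ih (Sum.inl ω')).2 (hsub hω')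
      · exact lt_of_lt_of_eq h1 ((dupe_PR M ω₀ i x hpre).trans
          (congrArg (fun s => M.PR i (retr M ω₀ x) s) (Sum.inl_injective.preimage_image A))).symm
  | diam φ ih => intro x; exact Iff.rfl
  | conj f ih => intro x; simp only [Sat4]; exact forall_congr' fun m => ih m x
  | prGt i α φ ih =>
    intro x
    simp only [Sat4]
    have hpre : Sum.inl ⁻¹' {x' | Sat4 u φ (dupe M ω₀) x'} = {ω' | Sat4 u φ M ω'} := by
      ext ω'
      exact ih (Sum.inl ω')
    have h2 : MeasurableSet[M.F] (Sum.inl ⁻¹' {x' | Sat4 u φ (dupe M ω₀) x'}) := by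
      rw [hpre]; exact hM φ
    have h3 : (dupe M ω₀).PR i x {ω' | Sat4 u φ (dupe M ω₀) ω'} =
        M.PR i (retr M ω₀ x) {ω' | Sat4 u φ M ω'} := by
      have h4 := dupe_PR M ω₀ i x h2
      rw [hpre] at h4
      exact h4
    rw [h3]

/-- Lemma: any satisfiable L4 formula is satisfiable at a state that is
measurable and has probability 0 for every player. -/
theorem satisfiable_at_null_state
    {S : Fin n → Type} [∀ j, Fintype (S j)] [∀ j, Nonempty (S j)]
    (u : ∀ i : Fin n, (∀ j, S j) → ℝ) (φ : L4 n S)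
    (hsat : ∃ (M : PStruct n S) (ω : M.Ω),
      (∀ ψ : L4 n S, MeasurableSet[M.F] {ω' | Sat4 u ψ M ω'}) ∧ Sat4 u φ M ω) :
    ∃ (M : PStruct n S) (ω : M.Ω),
      (∀ ψ : L4 n S, MeasurableSet[M.F] {ω' | Sat4 u ψ M ω'}) ∧
      Sat4 u φ M ω ∧
      MeasurableSet[M.F] {ω} ∧
      ∀ j : Fin n, M.PR j ω {ω} = 0 := by
  obtain ⟨M, ω₀, hM, hφ⟩ := hsat
  letI := M.F
  have hempty : Sum.inl ⁻¹' ({Sum.inr ()} : Set (M.Ω ⊕ Unit)) = (∅ : Set M.Ω) := by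
    ext ω'; simp
  have hsing : MeasurableSet[M.F] (Sum.inl ⁻¹' ({Sum.inr ()} : Set (M.Ω ⊕ Unit))) := by
    rw [hempty]; exact MeasurableSet.empty
  refine ⟨dupe M ω₀, Sum.inr (), ?_, ?_, ?_, ?_⟩
  · intro ψ
    have hpre : MeasurableSet[M.F] (Sum.inl ⁻¹' {x | Sat4 u ψ (dupe M ω₀) x}) := by
      have : Sum.inl ⁻¹' {x | Sat4 u ψ (dupe M ω₀) x} = {ω' | Sat4 u ψ M ω'} := by
        ext ω'; exact sat_dupe u M hM ω₀ ψ (Sum.inl ω')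
      rw [this]; exact hM ψ
    exact measSum hpre
  · exact (sat_dupe u M hM ω₀ φ (Sum.inr ())).2 hφ
  · exact measSum hsing
  · intro j
    exact (dupe_PR M ω₀ j (Sum.inr ()) hsing).trans (by rw [hempty]; exact measure_empty)

end IA
end

section
/- If for each player i = 1,…,n the formula φ_i ∈ L4_{i+} is satisfiable in an L4-measurable probability structure appropriate for Γ, then the conjunction φ_1 ∧ ⋯ ∧ φ_n is satisfiable in an L4-measurable probability structure appropriate for Γ. -/
open MeasureTheory

namespace IA

set_option linter.unusedVariables false

variable {n : ℕ}

variable {S : Fin n → Type}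

/-- `L4_{i+}`: `L4_i` (formulas with outermost operator `pr_i`) together with `true`,
`RAT_i` and `play_i(σ)`, closed under conjunction and negation. -/
inductive InL4iPlusC {S : Fin n → Type} (i : Fin n) : L4 n S → Prop where
  | tt : InL4iPlusC i .tt
  | RAT : InL4iPlusC i (.RAT i)
  | play (σ : S i) : InL4iPlusC i (.play i σ)
  | pr (α : Set.Icc (0:ℝ) 1) (φ : L4 n S) : InL4iPlusC i (.prGt i α φ)
  | neg {φ : L4 n S} : InL4iPlusC i φ → InL4iPlusC i (.neg φ)
  | and {φ ψ : L4 n S} : InL4iPlusC i φ → InL4iPlusC i ψ → InL4iPlusC i (.and φ ψ)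
  | conj {f : ℕ → L4 n S} : (∀ m, InL4iPlusC i (f m)) → InL4iPlusC i (.conj f)

set_option linter.unusedSectionVars false

/-! ### Construction of the combined structure -/

section Combo

variable (Ms : Fin n → PStruct n S)

instance iMsF (i : Fin n) : MeasurableSpace ((Ms i).Ω) := (Ms i).F

/-- The combined state space. -/
def CΩ : Type := (Σ i : Fin n, (Ms i).Ω) ⊕ Unit

instance : MeasurableSpace (CΩ Ms) := by unfold CΩ; infer_instance

/-- The embedding of the `i`-th copy. -/
def emb (i : Fin n) (w : (Ms i).Ω) : CΩ Ms := Sum.inl ⟨i, w⟩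

/-- The new state. -/
def nstar : CΩ Ms := Sum.inr ()

lemma measSet_sigma {A : Set (Σ i : Fin n, (Ms i).Ω)}
    (h : ∀ i, MeasurableSet (Sigma.mk i ⁻¹' A)) : MeasurableSet A :=
  MeasurableSpace.measurableSet_iInf.2 h

lemma emb_me (i : Fin n) : MeasurableEmbedding (emb Ms i) := by
  constructor
  · intro a b hab
    have h1 : (⟨i, a⟩ : Σ k : Fin n, (Ms k).Ω) = ⟨i, b⟩ := Sum.inl.inj hab
    exact eq_of_heq (Sigma.mk.inj_iff.1 h1).2
  · exact measurable_inl.comp (Measurable.of_le_map (iInf_le _ i))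
  · intro A hA
    have himg : emb Ms i '' A
        = Sum.inl '' (@Sigma.mk (Fin n) (fun k => (Ms k).Ω) i '' A) := by
      rw [Set.image_image]; rfl
    rw [himg]
    refine (measurableSet_inl_image).2 (measSet_sigma Ms ?_)
    intro a
    by_cases hai : a = i
    · subst hai
      have : @Sigma.mk (Fin n) (fun k => (Ms k).Ω) a ⁻¹' (@Sigma.mk (Fin n) (fun k => (Ms k).Ω) a '' A) = A :=
        Set.preimage_image_eq A sigma_mk_injective
      rw [this]; exact hA
    · have : @Sigma.mk (Fin n) (fun k => (Ms k).Ω) a ⁻¹' (@Sigma.mk (Fin n) (fun k => (Ms k).Ω) i '' A) = ∅ := by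
        ext x; simp only [Set.mem_preimage, Set.mem_image, Set.mem_empty_iff_false, iff_false]
        rintro ⟨y, _, hy⟩
        exact hai (congrArg Sigma.fst hy).symm
      rw [this]; exact MeasurableSet.empty
  
lemma measSet_C {T : Set (CΩ Ms)} (h : ∀ i, MeasurableSet (emb Ms i ⁻¹' T)) :
    MeasurableSet T := by
  erw [measurableSet_sum_iff]
  exact ⟨measSet_sigma Ms (fun i => h i), MeasurableSet.of_discrete⟩

lemma push_inj (i : Fin n) {μ ν : Measure ((Ms i).Ω)}
    (h : μ.map (emb Ms i) = ν.map (emb Ms i)) : μ = ν := by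
  refine Measure.ext fun A hA => ?_
  have hμ : μ A = μ.map (emb Ms i) (emb Ms i '' A) := by
    rw [(emb_me Ms i).map_apply, Set.preimage_image_eq A (emb_me Ms i).injective]
  have hν : ν A = ν.map (emb Ms i) (emb Ms i '' A) := by
    rw [(emb_me Ms i).map_apply, Set.preimage_image_eq A (emb_me Ms i).injective]
  rw [hμ, hν, h]

variable (ω0 : ∀ i, (Ms i).Ω)

/-- The combined probability structure. -/
noncomputable def Combo : PStruct n S where
  Ω := CΩ Ms
  F := inferInstance
  s := Sum.elim (fun p => (Ms p.1).s p.2) (fun _ => fun j => (Ms j).s (ω0 j) j)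
  PR := fun j => Sum.elim (fun p => ((Ms p.1).PR j p.2).map (emb Ms p.1))
    (fun _ => ((Ms j).PR j (ω0 j)).map (emb Ms j))
  PR_prob := by
    rintro j (⟨i, w⟩ | u)
    · haveI := (Ms i).PR_prob j w
      exact Measure.isProbabilityMeasure_map (emb_me Ms i).measurable.aemeasurable
    · haveI := (Ms j).PR_prob j (ω0 j)
      exact Measure.isProbabilityMeasure_map (emb_me Ms j).measurable.aemeasurable
  meas_play := by
    intro j σ
    refine measSet_C Ms ?_
    intro i
    exact (Ms i).meas_play j σ
  knows_play := by
    rintro j (⟨i, w⟩ | u)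
    · show ((Ms i).PR j w).map (emb Ms i) _ = 1
      rw [(emb_me Ms i).map_apply]
      exact (Ms i).knows_play j w
    · show ((Ms j).PR j (ω0 j)).map (emb Ms j) _ = 1
      rw [(emb_me Ms j).map_apply]
      exact (Ms j).knows_play j (ω0 j)
  meas_PR := by
    intro j π
    refine measSet_C Ms ?_
    intro i
    by_cases hex : ∃ μ : Measure ((Ms i).Ω), μ.map (emb Ms i) = π
    · obtain ⟨μ, hμ⟩ := hex
      have : emb Ms i ⁻¹' {ω | Sum.elim (fun p => ((Ms p.1).PR j p.2).map (emb Ms p.1))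
          (fun _ => ((Ms j).PR j (ω0 j)).map (emb Ms j)) ω = π} = {w | (Ms i).PR j w = μ} := by
        ext w
        simp only [Set.mem_preimage, Set.mem_setOf_eq, emb, Sum.elim_inl, ← hμ]
        exact ⟨fun h => push_inj Ms i h, fun h => congrArg (Measure.map (emb Ms i)) h⟩
      rw [this]
      exact (Ms i).meas_PR j μ
    · have : emb Ms i ⁻¹' {ω | Sum.elim (fun p => ((Ms p.1).PR j p.2).map (emb Ms p.1))
          (fun _ => ((Ms j).PR j (ω0 j)).map (emb Ms j)) ω = π} = ∅ := by
        ext w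
        simp only [Set.mem_preimage, Set.mem_setOf_eq, emb, Sum.elim_inl,
          Set.mem_empty_iff_false, iff_false]
        intro h
        exact hex ⟨(Ms i).PR j w, h⟩
      rw [this]
      exact MeasurableSet.empty
  knows_PR := by
    rintro j (⟨i, w⟩ | u)
    · show ((Ms i).PR j w).map (emb Ms i) _ = 1
      rw [(emb_me Ms i).map_apply]
      have : emb Ms i ⁻¹' {ω' | Sum.elim (fun p => ((Ms p.1).PR j p.2).map (emb Ms p.1))
          (fun _ => ((Ms j).PR j (ω0 j)).map (emb Ms j)) ω'
            = ((Ms i).PR j w).map (emb Ms i)} = {w' | (Ms i).PR j w' = (Ms i).PR j w} := by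
        ext w'
        simp only [Set.mem_preimage, Set.mem_setOf_eq, emb, Sum.elim_inl]
        exact ⟨fun h => push_inj Ms i h, fun h => congrArg (Measure.map (emb Ms i)) h⟩
      rw [show (Sum.inl ⟨i, w⟩ : CΩ Ms) = emb Ms i w from rfl] at *
      erw [this]
      exact (Ms i).knows_PR j w
    · show ((Ms j).PR j (ω0 j)).map (emb Ms j) _ = 1
      rw [(emb_me Ms j).map_apply]
      have : emb Ms j ⁻¹' {ω' | Sum.elim (fun p => ((Ms p.1).PR j p.2).map (emb Ms p.1))
          (fun _ => ((Ms j).PR j (ω0 j)).map (emb Ms j)) ω'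
            = ((Ms j).PR j (ω0 j)).map (emb Ms j)} = {w' | (Ms j).PR j w' = (Ms j).PR j (ω0 j)} := by
        ext w'
        simp only [Set.mem_preimage, Set.mem_setOf_eq, emb, Sum.elim_inl]
        exact ⟨fun h => push_inj Ms j h, fun h => congrArg (Measure.map (emb Ms j)) h⟩
      erw [this]
      exact (Ms j).knows_PR j (ω0 j)

end Combo

section Combo2

variable (Ms : Fin n → PStruct n S) (ω0 : ∀ i, (Ms i).Ω) [∀ j, Fintype (S j)]

lemma combo_PR_emb (j i : Fin n) (w : (Ms i).Ω) :
    (Combo Ms ω0).PR j (emb Ms i w) = ((Ms i).PR j w).map (emb Ms i) := rfl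

lemma combo_PR_emb_apply (j i : Fin n) (w : (Ms i).Ω) (T : Set (CΩ Ms)) :
    (Combo Ms ω0).PR j (emb Ms i w) T = (Ms i).PR j w (emb Ms i ⁻¹' T) :=
  (emb_me Ms i).map_apply _ _

lemma combo_PR_star_apply (j : Fin n) (T : Set (CΩ Ms)) :
    (Combo Ms ω0).PR j (nstar Ms) T = (Ms j).PR j (ω0 j) (emb Ms j ⁻¹' T) :=
  (emb_me Ms j).map_apply _ _

lemma combo_s_emb (i : Fin n) (w : (Ms i).Ω) :
    (Combo Ms ω0).s (emb Ms i w) = (Ms i).s w := rfl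

lemma marg_emb (j i : Fin n) (w : (Ms i).Ω) :
    margBelief (Combo Ms ω0) j (emb Ms i w) = margBelief (Ms i) j w := by
  funext τ
  unfold margBelief
  erw [combo_PR_emb_apply]
  rfl

lemma sat_emb (u : ∀ i : Fin n, (∀ j, S j) → ℝ) (ψ : L4 n S) :
    ∀ (i : Fin n) (w : (Ms i).Ω),
      Sat4 u ψ (Combo Ms ω0) (emb Ms i w) ↔ Sat4 u ψ (Ms i) w := by
  induction ψ with
  | tt => intro i w; exact Iff.rfl
  | RAT j =>
    intro i w
    show SatRAT u (Combo Ms ω0) j (emb Ms i w) ↔ SatRAT u (Ms i) j w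
    unfold SatRAT
    rw [marg_emb]
    exact Iff.rfl
  | play j σ => intro i w; exact Iff.rfl
  | neg ψ ih => intro i w; exact not_congr (ih i w)
  | and ψ₁ ψ₂ ih1 ih2 => intro i w; exact and_congr (ih1 i w) (ih2 i w)
  | B j ψ ih =>
    intro i w
    show (∃ A, _ ∧ _ ∧ (Combo Ms ω0).PR j (emb Ms i w) A = 1) ↔ _
    constructor
    · rintro ⟨A, hA, hsub, h1⟩
      refine ⟨emb Ms i ⁻¹' A, (emb_me Ms i).measurable hA, ?_, ?_⟩
      · intro w' hw'; exact (ih i w').1 (hsub hw')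
      · erw [combo_PR_emb_apply] at h1; exact h1
    · rintro ⟨A, hA, hsub, h1⟩
      refine ⟨emb Ms i '' A, (emb_me Ms i).measurableSet_image.2 hA, ?_, ?_⟩
      · rintro x ⟨w', hw', rfl⟩; exact (ih i w').2 (hsub hw')
      · erw [combo_PR_emb_apply, Set.preimage_image_eq _ (emb_me Ms i).injective]
        exact h1
  | Bpos j ψ ih =>
    intro i w
    show (∃ A, _ ∧ _ ∧ 0 < (Combo Ms ω0).PR j (emb Ms i w) A) ↔ _
    constructor
    · rintro ⟨A, hA, hsub, h1⟩
      refine ⟨emb Ms i ⁻¹' A, (emb_me Ms i).measurable hA, ?_, ?_⟩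
      · intro w' hw'; exact (ih i w').1 (hsub hw')
      · erw [combo_PR_emb_apply] at h1; exact h1
    · rintro ⟨A, hA, hsub, h1⟩
      refine ⟨emb Ms i '' A, (emb_me Ms i).measurableSet_image.2 hA, ?_, ?_⟩
      · rintro x ⟨w', hw', rfl⟩; exact (ih i w').2 (hsub hw')
      · erw [combo_PR_emb_apply, Set.preimage_image_eq _ (emb_me Ms i).injective]
        exact h1
  | diam ψ ih => intro i w; exact Iff.rfl
  | conj f ih => intro i w; exact forall_congr' fun m => ih m i w
  | prGt j α ψ ih =>
    intro i w
    show (α : ℝ) < ((Combo Ms ω0).PR j (emb Ms i w) _).toReal ↔ _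
    have hset : (Combo Ms ω0).PR j (emb Ms i w) {ω' | Sat4 u ψ (Combo Ms ω0) ω'}
        = (Ms i).PR j w {w' | Sat4 u ψ (Ms i) w'} := by
      erw [combo_PR_emb_apply]
      exact congrArg _ (Set.ext fun w' => ih i w')
    rw [hset]
    exact Iff.rfl

lemma combo_PR_star (j : Fin n) :
    (Combo Ms ω0).PR j (nstar Ms) = ((Ms j).PR j (ω0 j)).map (emb Ms j) := rfl

lemma sat_star (u : ∀ i : Fin n, (∀ j, S j) → ℝ) {i : Fin n} {ψ : L4 n S}
    (h : InL4iPlusC i ψ) :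
    Sat4 u ψ (Combo Ms ω0) (nstar Ms) ↔ Sat4 u ψ (Ms i) (ω0 i) := by
  induction h with
  | tt => exact Iff.rfl
  | RAT =>
    show SatRAT u (Combo Ms ω0) i (nstar Ms) ↔ SatRAT u (Ms i) i (ω0 i)
    unfold SatRAT
    have hm : margBelief (Combo Ms ω0) i (nstar Ms) = margBelief (Ms i) i (ω0 i) := by
      funext τ
      unfold margBelief
      erw [combo_PR_star_apply]
      rfl
    rw [hm]
    exact Iff.rfl
  | play σ => exact Iff.rfl
  | pr α ψ =>
    show (α : ℝ) < ((Combo Ms ω0).PR i (nstar Ms) _).toReal ↔ _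
    have hset : (Combo Ms ω0).PR i (nstar Ms) {ω' | Sat4 u ψ (Combo Ms ω0) ω'}
        = (Ms i).PR i (ω0 i) {w' | Sat4 u ψ (Ms i) w'} := by
      erw [combo_PR_star_apply]
      exact congrArg _ (Set.ext fun w' => sat_emb Ms ω0 u ψ i w')
    rw [hset]
    exact Iff.rfl
  | neg h ih => exact not_congr ih
  | and h1 h2 ih1 ih2 => exact and_congr ih1 ih2
  | conj h ih => exact forall_congr' fun m => ih m

end Combo2

lemma sat_conjList_s15 [∀ j, Fintype (S j)] (u : ∀ i : Fin n, (∀ j, S j) → ℝ)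
    (M : PStruct n S) (x : M.Ω) :
    ∀ l : List (L4 n S), Sat4 u (conjList4 l) M x ↔ ∀ ψ ∈ l, Sat4 u ψ M x
  | [] => by simp [conjList4, Sat4]
  | φ :: l => by
    simp only [conjList4, List.mem_cons]
    constructor
    · rintro ⟨h1, h2⟩ ψ (rfl | hl)
      · exact h1
      · exact (sat_conjList_s15 u M x l).1 h2 ψ hl
    · intro h
      exact ⟨h φ (Or.inl rfl), (sat_conjList_s15 u M x l).2 fun ψ hl => h ψ (Or.inr hl)⟩

/-- Lemma: satisfiable formulas `φ_i ∈ L4_{i+}` for the different players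
are jointly satisfiable. -/
theorem jointly_satisfiable
    {S : Fin n → Type} [∀ j, Fintype (S j)] [∀ j, Nonempty (S j)]
    (u : ∀ i : Fin n, (∀ j, S j) → ℝ) (φ : ∀ i : Fin n, L4 n S)
    (hfrag : ∀ i, InL4iPlusC i (φ i))
    (hsat : ∀ i, ∃ (M : PStruct n S) (ω : M.Ω),
      (∀ ψ : L4 n S, MeasurableSet[M.F] {ω' | Sat4 u ψ M ω'}) ∧ Sat4 u (φ i) M ω) :
    ∃ (M : PStruct n S) (ω : M.Ω),
      (∀ ψ : L4 n S, MeasurableSet[M.F] {ω' | Sat4 u ψ M ω'}) ∧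
      Sat4 u (conjFin4 φ) M ω := by
  choose Ms ω0 hmeas hphi using hsat
  refine ⟨Combo Ms ω0, nstar Ms, ?_, ?_⟩
  · intro ψ
    refine measSet_C Ms ?_
    intro i
    exact (hmeas i ψ).congr (Set.ext fun w => (sat_emb Ms ω0 u ψ i w).symm)
  · rw [conjFin4]; erw [sat_conjList_s15]
    intro ψ hψ
    simp only [List.mem_map] at hψ
    obtain ⟨i, _, rfl⟩ := hψ
    exact (sat_star Ms ω0 u (hfrag i)).2 (hphi i)


end IA
end

section
/- Every formula of L3(Γ) is semantically equivalent (true at exactly the same states of all probability structures appropriate for Γ) to a finite disjunction of basic formulas, where a basic formula is a conjunction ψ_1 ∧ ⋯ ∧ ψ_n with ψ_i ∈ L3_{i+} for each i. -/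
open MeasureTheory

namespace IA

set_option linter.unusedVariables false

variable {n : ℕ}

variable {S : Fin n → Type}

/-! ### The language L3 (`pr_i(φ) ≥ α` and `pr_i(φ) > α` for rational `α ∈ [0,1]`) -/

inductive L3 (n : ℕ) (S : Fin n → Type) : Type where
  | tt : L3 n S
  | RAT (i : Fin n) : L3 n S
  | play (i : Fin n) (σ : S i) : L3 n S
  | neg (φ : L3 n S) : L3 n S
  | and (φ ψ : L3 n S) : L3 n S
  | B (i : Fin n) (φ : L3 n S) : L3 n S
  | Bpos (i : Fin n) (φ : L3 n S) : L3 n S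
  | diam (φ : L3 n S) : L3 n S
  | prGe (i : Fin n) (α : Set.Icc (0:ℚ) 1) (φ : L3 n S) : L3 n S
  | prGt (i : Fin n) (α : Set.Icc (0:ℚ) 1) (φ : L3 n S) : L3 n S

def Sat3 [∀ j, Fintype (S j)] (u : ∀ i : Fin n, (∀ j, S j) → ℝ) :
    L3 n S → (M : PStruct n S) → M.Ω → Prop
  | .tt, _, _ => True
  | .RAT i, M, ω => SatRAT u M i ω
  | .play i σ, M, ω => M.s ω i = σ
  | .neg φ, M, ω => ¬ Sat3 u φ M ω
  | .and φ ψ, M, ω => Sat3 u φ M ω ∧ Sat3 u ψ M ω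
  | .B i φ, M, ω => ∃ A, MeasurableSet[M.F] A ∧ A ⊆ {ω' | Sat3 u φ M ω'} ∧ M.PR i ω A = 1
  | .Bpos i φ, M, ω => ∃ A, MeasurableSet[M.F] A ∧ A ⊆ {ω' | Sat3 u φ M ω'} ∧ 0 < M.PR i ω A
  | .diam φ, _, _ => ∃ (M' : PStruct n S) (ω' : M'.Ω), Sat3 u φ M' ω'
  | .prGe i α φ, M, ω => ((α : ℚ) : ℝ) ≤ (M.PR i ω {ω' | Sat3 u φ M ω'}).toReal
  | .prGt i α φ, M, ω => ((α : ℚ) : ℝ) < (M.PR i ω {ω' | Sat3 u φ M ω'}).toReal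

/-- `L3_{i+}`: `L3_i` together with `true`, `RAT_i`, `play_i(σ)`, closed under conjunction
and negation. -/
inductive InL3iPlusC (i : Fin n) : L3 n S → Prop where
  | tt : InL3iPlusC i .tt
  | RAT : InL3iPlusC i (.RAT i)
  | play (σ : S i) : InL3iPlusC i (.play i σ)
  | prGe (α : Set.Icc (0:ℚ) 1) (φ : L3 n S) : InL3iPlusC i (.prGe i α φ)
  | prGt (α : Set.Icc (0:ℚ) 1) (φ : L3 n S) : InL3iPlusC i (.prGt i α φ)
  | neg {φ : L3 n S} : InL3iPlusC i φ → InL3iPlusC i (.neg φ)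
  | and {φ ψ : L3 n S} : InL3iPlusC i φ → InL3iPlusC i ψ → InL3iPlusC i (.and φ ψ)

/-- `L3_{(-i)+} = ∪_{j ≠ i} L3_{j+}`. -/
def InL3MinusPlusC (i : Fin n) (ψ : L3 n S) : Prop := ∃ j, j ≠ i ∧ InL3iPlusC j ψ

def conjList3 : List (L3 n S) → L3 n S
  | [] => .tt
  | φ :: l => .and φ (conjList3 l)

def orF3 (φ ψ : L3 n S) : L3 n S := .neg (.and (.neg φ) (.neg ψ))

/-- finite disjunction (the empty disjunction is `false = ¬ true`) -/
def disjList3 : List (L3 n S) → L3 n S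
  | [] => .neg .tt
  | φ :: l => orF3 φ (disjList3 l)

/-- finite conjunction over all players -/
def conjPlayers3 (ψ : Fin n → L3 n S) : L3 n S := conjList3 ((List.finRange n).map ψ)

section AuxProof

variable [∀ j, Fintype (S j)] (u : ∀ i : Fin n, (∀ j, S j) → ℝ)

lemma sat_conjList3 (l : List (L3 n S)) (M : PStruct n S) (ω : M.Ω) :
    Sat3 u (conjList3 l) M ω ↔ ∀ χ ∈ l, Sat3 u χ M ω := by
  induction l with
  | nil => simp [conjList3, Sat3]
  | cons φ l ih => simp [conjList3, Sat3, ih]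

lemma sat_orF3 (φ ψ : L3 n S) (M : PStruct n S) (ω : M.Ω) :
    Sat3 u (orF3 φ ψ) M ω ↔ Sat3 u φ M ω ∨ Sat3 u ψ M ω := by
  simp only [orF3, Sat3]; tauto

lemma sat_disjList3 (l : List (L3 n S)) (M : PStruct n S) (ω : M.Ω) :
    Sat3 u (disjList3 l) M ω ↔ ∃ χ ∈ l, Sat3 u χ M ω := by
  induction l with
  | nil => simp [disjList3, Sat3]
  | cons φ l ih => simp [disjList3, sat_orF3, ih]

lemma sat_conjPlayers3 (ψ : Fin n → L3 n S) (M : PStruct n S) (ω : M.Ω) :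
    Sat3 u (conjPlayers3 ψ) M ω ↔ ∀ i, Sat3 u (ψ i) M ω := by
  rw [conjPlayers3, sat_conjList3]
  constructor
  · intro h i
    exact h _ (List.mem_map_of_mem (f := ψ) (List.mem_finRange i))
  · rintro h χ hχ
    rcases List.mem_map.1 hχ with ⟨i, _, rfl⟩
    exact h i

/-- `φ` is equivalent to a finite disjunction of basic formulas, presented as a list of
`Fin n`-indexed families of conjuncts. -/
def Good (φ : L3 n S) : Prop :=
  ∃ L : List (Fin n → L3 n S),
    (∀ f ∈ L, ∀ i, InL3iPlusC i (f i)) ∧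
    ∀ (M : PStruct n S) (ω : M.Ω), Sat3 u φ M ω ↔ ∃ f ∈ L, ∀ i, Sat3 u (f i) M ω

lemma good_of_equiv {φ ψ : L3 n S}
    (h : ∀ (M : PStruct n S) (ω : M.Ω), Sat3 u φ M ω ↔ Sat3 u ψ M ω)
    (hg : Good u ψ) : Good u φ := by
  rcases hg with ⟨L, hL, hsem⟩
  exact ⟨L, hL, fun M ω => (h M ω).trans (hsem M ω)⟩

lemma good_basic (i : Fin n) {χ : L3 n S} (h : InL3iPlusC i χ) : Good u χ := by
  refine ⟨[fun j => if j = i then χ else .tt], ?_, ?_⟩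
  · rintro f hf j
    simp only [List.mem_singleton] at hf
    subst hf
    by_cases hj : j = i
    · subst hj; simp only [if_pos rfl]; exact h
    · simp only [if_neg hj]; exact InL3iPlusC.tt
  · intro M ω
    constructor
    · intro hs
      refine ⟨_, List.mem_singleton_self _, fun j => ?_⟩
      by_cases hj : j = i
      · simp only [if_pos hj]; exact hs
      · simp only [if_neg hj]; trivial
    · rintro ⟨f, hf, hall⟩
      simp only [List.mem_singleton] at hf
      subst hf
      have := hall i
      simpa using this

/-- If the truth of `φ` at a state depends only on `PR_i` at that state, then `φ` is
equivalent to `pr_i(φ) ≥ 1`. -/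
lemma sat_iff_prGe_one (i : Fin n) (φ : L3 n S)
    (hdep : ∀ (M : PStruct n S) (ω ω' : M.Ω),
      M.PR i ω = M.PR i ω' → (Sat3 u φ M ω ↔ Sat3 u φ M ω'))
    (M : PStruct n S) (ω : M.Ω) :
    Sat3 u φ M ω ↔ Sat3 u (.prGe i ⟨1, by norm_num⟩ φ) M ω := by
  have hprob : IsProbabilityMeasure (M.PR i ω) := M.PR_prob i ω
  set μ := M.PR i ω with hμ
  set K : Set M.Ω := {ω' | M.PR i ω' = M.PR i ω} with hK
  have hKmeas : MeasurableSet[M.F] K := M.meas_PR i (M.PR i ω)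
  have hKone : μ K = 1 := M.knows_PR i ω
  show Sat3 u φ M ω ↔ ((((⟨1, by norm_num⟩ : Set.Icc (0:ℚ) 1) : ℚ) : ℝ) ≤ _)
  have hcast : (((⟨1, by norm_num⟩ : Set.Icc (0:ℚ) 1) : ℚ) : ℝ) = 1 := by norm_num
  rw [hcast]
  set s : Set M.Ω := {ω' | Sat3 u φ M ω'} with hs
  constructor
  · intro hsat
    have hsub : K ⊆ s := by
      intro ω' hω'
      exact (hdep M ω ω' hω'.symm).1 hsat
    have h1 : (1 : ENNReal) ≤ μ s := hKone ▸ measure_mono hsub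
    have h2 : μ s ≤ 1 := prob_le_one
    have : μ s = 1 := le_antisymm h2 h1
    rw [this]
    norm_num
  · intro hge
    have h2 : μ s ≤ 1 := prob_le_one
    have hne : μ s ≠ ⊤ := (lt_of_le_of_lt h2 (by norm_num)).ne
    have hs1 : μ s = 1 := by
      have : (μ s).toReal = 1 := by
        have hle : (μ s).toReal ≤ 1 := by
          calc (μ s).toReal ≤ (1 : ENNReal).toReal :=
            ENNReal.toReal_mono (by norm_num) h2
          _ = 1 := by simp
        linarith
      rwa [ENNReal.toReal_eq_one_iff] at this
    have hKc : μ Kᶜ = 0 := by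
      have := measure_compl hKmeas (by rw [hKone]; norm_num)
      rw [hKone] at this
      simpa using this
    have hdiff : μ (s \ K) = 0 :=
      le_antisymm (le_trans (measure_mono (Set.diff_subset_compl s K)) hKc.le) zero_le
    have hinter : μ (s ∩ K) = 1 := by
      have h := measure_inter_add_diff (μ := μ) s hKmeas
      rw [hdiff, add_zero, hs1] at h
      exact h
    rcases Set.eq_empty_or_nonempty (s ∩ K) with he | ⟨ω', hω'⟩
    · rw [he, measure_empty] at hinter
      exact absurd hinter (by norm_num)
    · exact (hdep M ω ω' hω'.2.symm).2 hω'.1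

lemma good_B (i : Fin n) (φ : L3 n S) : Good u (.B i φ) := by
  refine good_of_equiv u (sat_iff_prGe_one u i (.B i φ) ?_) (good_basic u i (InL3iPlusC.prGe _ _))
  intro M ω ω' h
  show (∃ A, _) ↔ (∃ A, _)
  rw [h]

lemma good_Bpos (i : Fin n) (φ : L3 n S) : Good u (.Bpos i φ) := by
  refine good_of_equiv u (sat_iff_prGe_one u i (.Bpos i φ) ?_)
    (good_basic u i (InL3iPlusC.prGe _ _))
  intro M ω ω' h
  show (∃ A, _) ↔ (∃ A, _)
  rw [h]

/-- DNF of the conjunction of two DNFs. -/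
def andList (L1 L2 : List (Fin n → L3 n S)) : List (Fin n → L3 n S) :=
  L1.flatMap (fun f => L2.map (fun g => fun i => .and (f i) (g i)))

lemma mem_andList {L1 L2 : List (Fin n → L3 n S)}
    (h1 : ∀ f ∈ L1, ∀ i, InL3iPlusC i (f i)) (h2 : ∀ g ∈ L2, ∀ i, InL3iPlusC i (g i)) :
    ∀ h ∈ andList L1 L2, ∀ i, InL3iPlusC i (h i) := by
  intro h hh i
  rcases List.mem_flatMap.1 hh with ⟨f, hf, hh'⟩
  rcases List.mem_map.1 hh' with ⟨g, hg, rfl⟩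
  exact InL3iPlusC.and (h1 f hf i) (h2 g hg i)

lemma sat_andList (L1 L2 : List (Fin n → L3 n S)) (M : PStruct n S) (ω : M.Ω) :
    (∃ h ∈ andList L1 L2, ∀ i, Sat3 u (h i) M ω) ↔
      (∃ f ∈ L1, ∀ i, Sat3 u (f i) M ω) ∧ (∃ g ∈ L2, ∀ i, Sat3 u (g i) M ω) := by
  constructor
  · rintro ⟨h, hh, hsat⟩
    rcases List.mem_flatMap.1 hh with ⟨f, hf, hh'⟩
    rcases List.mem_map.1 hh' with ⟨g, hg, rfl⟩
    exact ⟨⟨f, hf, fun i => (hsat i).1⟩, ⟨g, hg, fun i => (hsat i).2⟩⟩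
  · rintro ⟨⟨f, hf, hfs⟩, ⟨g, hg, hgs⟩⟩
    refine ⟨fun i => .and (f i) (g i), ?_, fun i => ⟨hfs i, hgs i⟩⟩
    exact List.mem_flatMap.2 ⟨f, hf, List.mem_map.2 ⟨g, hg, rfl⟩⟩

/-- DNF of the negation of a DNF. -/
def negList : List (Fin n → L3 n S) → List (Fin n → L3 n S)
  | [] => [fun _ => .tt]
  | f :: L => (List.finRange n).flatMap (fun i =>
      (negList L).map (fun g => fun j => if j = i then .and (.neg (f i)) (g j) else g j))

lemma mem_negList : ∀ (L : List (Fin n → L3 n S)),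
    (∀ f ∈ L, ∀ i, InL3iPlusC i (f i)) → ∀ g ∈ negList L, ∀ j, InL3iPlusC j (g j) := by
  intro L
  induction L with
  | nil =>
    intro _ g hg j
    simp only [negList, List.mem_singleton] at hg
    subst hg
    exact InL3iPlusC.tt
  | cons f L ih =>
    intro hL g hg j
    simp only [negList] at hg
    rcases List.mem_flatMap.1 hg with ⟨i, _, hg'⟩
    rcases List.mem_map.1 hg' with ⟨g', hg'', rfl⟩
    have hg'j : InL3iPlusC j (g' j) :=
      ih (fun f' hf' => hL f' (List.mem_cons_of_mem _ hf')) g' hg'' j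
    by_cases hj : j = i
    · subst hj
      simp only [if_pos rfl]
      exact InL3iPlusC.and (InL3iPlusC.neg (hL f List.mem_cons_self j)) hg'j
    · simp only [if_neg hj]
      exact hg'j

lemma sat_negList : ∀ (L : List (Fin n → L3 n S)) (M : PStruct n S) (ω : M.Ω),
    (∃ g ∈ negList L, ∀ j, Sat3 u (g j) M ω) ↔ ∀ f ∈ L, ¬ ∀ i, Sat3 u (f i) M ω := by
  intro L
  induction L with
  | nil =>
    intro M ω
    simp [negList, Sat3]
  | cons f L ih =>
    intro M ω
    constructor
    · rintro ⟨g, hg, hsat⟩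
      simp only [negList] at hg
      rcases List.mem_flatMap.1 hg with ⟨i, _, hg'⟩
      rcases List.mem_map.1 hg' with ⟨g', hg'', rfl⟩
      have hi := hsat i
      simp only [if_pos rfl] at hi
      have hneg : ¬ Sat3 u (f i) M ω := hi.1
      have hg's : ∀ j, Sat3 u (g' j) M ω := by
        intro j
        by_cases hj : j = i
        · subst hj; exact hi.2
        · have := hsat j; simpa only [if_neg hj] using this
      intro f' hf'
      rcases List.mem_cons.1 hf' with rfl | hf'
      · intro hall; exact hneg (hall i)
      · exact (ih M ω).1 ⟨g', hg'', hg's⟩ f' hf'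
    · intro hall
      have h1 : ¬ ∀ i, Sat3 u (f i) M ω := hall f List.mem_cons_self
      rcases not_forall.1 h1 with ⟨i, hi⟩
      have h2 : ∃ g ∈ negList L, ∀ j, Sat3 u (g j) M ω :=
        (ih M ω).2 (fun f' hf' => hall f' (List.mem_cons_of_mem _ hf'))
      rcases h2 with ⟨g', hg', hg's⟩
      refine ⟨fun j => if j = i then .and (.neg (f i)) (g' j) else g' j, ?_, ?_⟩
      · simp only [negList]
        exact List.mem_flatMap.2 ⟨i, List.mem_finRange i, List.mem_map.2 ⟨g', hg', rfl⟩⟩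
      · intro j
        by_cases hj : j = i
        · subst hj
          simp only [if_pos rfl]
          exact ⟨hi, hg's j⟩
        · simpa only [if_neg hj] using hg's j

lemma good_all (φ : L3 n S) : Good u φ := by
  induction φ with
  | tt =>
    refine ⟨[fun _ => .tt], ?_, ?_⟩
    · rintro f hf i
      simp only [List.mem_singleton] at hf
      subst hf
      exact InL3iPlusC.tt
    · intro M ω
      simp [Sat3]
  | RAT i => exact good_basic u i InL3iPlusC.RAT
  | play i σ => exact good_basic u i (InL3iPlusC.play σ)
  | prGe i α φ _ => exact good_basic u i (InL3iPlusC.prGe α φ)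
  | prGt i α φ _ => exact good_basic u i (InL3iPlusC.prGt α φ)
  | B i φ _ => exact good_B u i φ
  | Bpos i φ _ => exact good_Bpos u i φ
  | neg φ ih =>
    rcases ih with ⟨L, hL, hsem⟩
    refine ⟨negList L, mem_negList L hL, ?_⟩
    intro M ω
    rw [sat_negList]
    show (¬ Sat3 u φ M ω) ↔ _
    rw [hsem M ω]
    push_neg
    rfl
  | and φ ψ ihφ ihψ =>
    rcases ihφ with ⟨L1, hL1, hsem1⟩
    rcases ihψ with ⟨L2, hL2, hsem2⟩
    refine ⟨andList L1 L2, mem_andList hL1 hL2, ?_⟩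
    intro M ω
    rw [sat_andList]
    show (Sat3 u φ M ω ∧ Sat3 u ψ M ω) ↔ _
    rw [hsem1 M ω, hsem2 M ω]
  | diam φ _ =>
    by_cases h : ∃ (M' : PStruct n S) (ω' : M'.Ω), Sat3 u φ M' ω'
    · refine ⟨[fun _ => .tt], ?_, ?_⟩
      · rintro f hf i
        simp only [List.mem_singleton] at hf
        subst hf
        exact InL3iPlusC.tt
      · intro M ω
        constructor
        · intro _
          exact ⟨fun _ => .tt, List.mem_singleton_self _, fun _ => trivial⟩
        · intro _
          exact h
    · refine ⟨[], ?_, ?_⟩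
      · rintro f hf i
        simp at hf
      · intro M ω
        constructor
        · intro hs
          exact absurd hs h
        · rintro ⟨f, hf, _⟩
          simp at hf

end AuxProof

/-- Lemma: every L3 formula is semantically equivalent to a finite
disjunction of basic formulas `ψ_1 ∧ ⋯ ∧ ψ_n` with `ψ_i ∈ L3_{i+}`. -/
theorem L3_equiv_disjunction_of_basic
    {S : Fin n → Type} [∀ j, Fintype (S j)] [∀ j, Nonempty (S j)]
    (u : ∀ i : Fin n, (∀ j, S j) → ℝ) (φ : L3 n S) :
    ∃ l : List (L3 n S),
      (∀ χ ∈ l, ∃ ψ : Fin n → L3 n S, (∀ i, InL3iPlusC i (ψ i)) ∧ χ = conjPlayers3 ψ) ∧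
      ∀ (M : PStruct n S) (ω : M.Ω), Sat3 u φ M ω ↔ Sat3 u (disjList3 l) M ω := by
  rcases good_all u φ with ⟨L, hL, hsem⟩
  refine ⟨L.map conjPlayers3, ?_, ?_⟩
  · intro χ hχ
    rcases List.mem_map.1 hχ with ⟨f, hf, rfl⟩
    exact ⟨f, hL f hf, rfl⟩
  · intro M ω
    rw [sat_disjList3, hsem M ω]
    constructor
    · rintro ⟨f, hf, hs⟩
      exact ⟨conjPlayers3 f, List.mem_map.2 ⟨f, hf, rfl⟩, (sat_conjPlayers3 u f M ω).2 hs⟩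
    · rintro ⟨χ, hχ, hs⟩
      rcases List.mem_map.1 hχ with ⟨f, hf, rfl⟩
      exact ⟨f, hf, (sat_conjPlayers3 u f M ω).1 hs⟩

end IA
end
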